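/- arXiv:2401.15719 — 4 statements merged into one kernel-verified Lean document; each statement's English description precedes it below -/
import Mathlib

section
/- Let A and B be real d×d matrices and let Σ be a symmetric positive definite d×d matrix satisfying the Lyapunov equation ΣAᵀ + AΣ + BBᵀ = 0. Let Z̃ be a Gaussian random vector with law N(0, Σ). Then for every twice continuously differentiable function f : ℝ^d → ℝ whose Hessian is bounded on ℝ^d, E[ ∇f(Z̃)ᵀ A Z̃ + (1/2) Tr(∇²f(Z̃) BBᵀ) ] = 0. -/
open MeasureTheory ProbabilityTheory
open scoped BigOperators NNReal ENNReal RealInnerProductSpace Matrix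

noncomputable section

/-- The standard Gaussian measure `N(0, I_d)` on `ℝ^d`. -/
def stdGaussian (d : ℕ) : Measure (EuclideanSpace ℝ (Fin d)) :=
  (Measure.pi fun _ : Fin d => gaussianReal 0 1).map (EuclideanSpace.equiv (Fin d) ℝ).symm

/-- Multiplication of a vector in `ℝ^d` by a `d × d` matrix. -/
def mulVecE {d : ℕ} (M : Matrix (Fin d) (Fin d) ℝ) (x : EuclideanSpace ℝ (Fin d)) :
    EuclideanSpace ℝ (Fin d) :=
  (EuclideanSpace.equiv (Fin d) ℝ).symm (M.mulVec (EuclideanSpace.equiv (Fin d) ℝ x))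

/-- The Hessian of `f : ℝ^d → ℝ`, as a continuous linear map. -/
def hess {d : ℕ} (f : EuclideanSpace ℝ (Fin d) → ℝ) (x : EuclideanSpace ℝ (Fin d)) :
    EuclideanSpace ℝ (Fin d) →L[ℝ] EuclideanSpace ℝ (Fin d) :=
  fderiv ℝ (fun y => gradient f y) x

/-- The Laplacian of `f : ℝ^d → ℝ` (trace of the Hessian). -/
def lap {d : ℕ} (f : EuclideanSpace ℝ (Fin d) → ℝ) (x : EuclideanSpace ℝ (Fin d)) : ℝ :=
  ∑ i : Fin d, ⟪hess f x (EuclideanSpace.single i 1), EuclideanSpace.single i 1⟫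


/-- The Hessian of `f` as a `d × d` matrix. -/
def hessMat {d : ℕ} (f : EuclideanSpace ℝ (Fin d) → ℝ) (x : EuclideanSpace ℝ (Fin d)) :
    Matrix (Fin d) (Fin d) ℝ :=
  Matrix.of fun i j => ⟪EuclideanSpace.single i (1:ℝ), hess f x (EuclideanSpace.single j 1)⟫

/-- The centered Gaussian measure on `ℝ^d` with covariance matrix `S`, realized as the
pushforward of the standard Gaussian by the positive semidefinite square root of `S`. -/
def gaussianCov {d : ℕ} {S : Matrix (Fin d) (Fin d) ℝ} (hS : S.PosSemidef) :
    Measure (EuclideanSpace ℝ (Fin d)) :=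
  (stdGaussian d).map fun z => mulVecE
    ((hS.1.eigenvectorUnitary : Matrix (Fin d) (Fin d) ℝ) *
      Matrix.diagonal ((↑) ∘ (fun x : ℝ => √x) ∘ hS.1.eigenvalues) *
      (star hS.1.eigenvectorUnitary : Matrix (Fin d) (Fin d) ℝ)) z


local notation "γ" => ProbabilityTheory.gaussianReal 0 1

namespace OUAux

open Real

lemma phi_eq (t : ℝ) : gaussianPDFReal 0 1 t = (√(2 * π))⁻¹ * rexp (-(2⁻¹) * t ^ 2) := by
  simp only [gaussianPDFReal]
  push_cast
  norm_num
  left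
  ring

lemma phi_pos (t : ℝ) : 0 < gaussianPDFReal 0 1 t :=
  gaussianPDFReal_pos 0 1 t one_ne_zero

lemma phi_cont : Continuous (gaussianPDFReal 0 1) := by
  simp only [gaussianPDFReal_def]
  fun_prop

lemma hasDerivAt_phi (t : ℝ) :
    HasDerivAt (gaussianPDFReal 0 1) (-t * gaussianPDFReal 0 1 t) t := by
  simp only [funext phi_eq]
  have h : HasDerivAt (fun t : ℝ => -(2⁻¹ : ℝ) * t ^ 2) (-t) t := by
    simpa using ((hasDerivAt_pow 2 t).const_mul (-(2⁻¹ : ℝ)))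
  have := (h.exp).const_mul (√(2 * π))⁻¹
  refine this.congr_deriv ?_
  ring

/-- Conversion: integral against `γ` equals integral against the density. -/
lemma integral_gauss (w : ℝ → ℝ) :
    ∫ t, w t ∂γ = ∫ t, w t * gaussianPDFReal 0 1 t := by
  rw [gaussianReal_of_var_ne_zero 0 one_ne_zero]
  have hm : Measurable fun x => (gaussianPDFReal 0 1 x).toNNReal :=
    (measurable_gaussianPDFReal 0 1).real_toNNReal
  have hd : gaussianPDF 0 1 = fun x => ((gaussianPDFReal 0 1 x).toNNReal : ℝ≥0∞) := rfl
  rw [hd, integral_withDensity_eq_integral_smul hm w]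
  congr 1 with t
  simp [NNReal.smul_def, Real.coe_toNNReal _ (gaussianPDFReal_nonneg 0 1 t)]
  ring

lemma integrable_gauss_iff {w : ℝ → ℝ} (hw : AEStronglyMeasurable w γ) :
    Integrable w γ ↔ Integrable (fun t => w t * gaussianPDFReal 0 1 t) := by
  rw [gaussianReal_of_var_ne_zero 0 one_ne_zero]
  rw [integrable_withDensity_iff (measurable_gaussianPDF 0 1)
    (ae_of_all _ fun x => ENNReal.ofReal_lt_top)]
  have : ∀ t : ℝ, (gaussianPDF 0 1 t).toReal = gaussianPDFReal 0 1 t := fun t =>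
    ENNReal.toReal_ofReal (gaussianPDFReal_nonneg 0 1 t)
  simp_rw [this]

lemma integrable_abs_pow_gauss_vol (n : ℕ) {b : ℝ} (hb : 0 < b) :
    Integrable (fun t : ℝ => |t| ^ n * rexp (-b * t ^ 2)) := by
  have h := integrable_rpow_mul_exp_neg_mul_sq hb (s := (n : ℝ))
    (lt_of_lt_of_le (by norm_num) (Nat.cast_nonneg n))
  have he : (fun x : ℝ => x ^ (n : ℝ) * rexp (-b * x ^ 2))
      = fun x : ℝ => x ^ n * rexp (-b * x ^ 2) := by
    funext x; rw [Real.rpow_natCast]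
  rw [he] at h
  simpa [abs_mul, abs_pow, abs_of_nonneg (Real.exp_pos _).le] using h.abs

lemma integrable_abs_pow_phi (n : ℕ) :
    Integrable (fun t : ℝ => |t| ^ n * gaussianPDFReal 0 1 t) := by
  simp only [funext phi_eq]
  have := (integrable_abs_pow_gauss_vol n (b := 2⁻¹) (by norm_num)).const_mul (√(2 * π))⁻¹
  convert this using 2 with t
  ring

/-- Integrability against the gaussian density of anything with quadratic growth. -/
lemma integrable_quad_phi {w : ℝ → ℝ} (hw : AEStronglyMeasurable w volume)
    (c₀ c₁ c₂ : ℝ) (hb : ∀ t, |w t| ≤ c₀ + c₁ * |t| + c₂ * t ^ 2) :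
    Integrable (fun t => w t * gaussianPDFReal 0 1 t) := by
  have h0 := integrable_abs_pow_phi 0
  have h1 := integrable_abs_pow_phi 1
  have h2 := integrable_abs_pow_phi 2
  simp only [pow_zero, pow_one, one_mul] at h0 h1 h2
  have hdom : Integrable (fun t : ℝ =>
      c₀ * gaussianPDFReal 0 1 t + c₁ * (|t| * gaussianPDFReal 0 1 t)
        + c₂ * (|t| ^ 2 * gaussianPDFReal 0 1 t)) :=
    ((h0.const_mul c₀).add (h1.const_mul c₁)).add ((integrable_abs_pow_phi 2).const_mul c₂)
  refine hdom.mono' (hw.mul phi_cont.aestronglyMeasurable) (ae_of_all _ fun t => ?_)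
  have hφ := (phi_pos t).le
  have := hb t
  have h1t : |w t * gaussianPDFReal 0 1 t| = |w t| * gaussianPDFReal 0 1 t := by
    rw [abs_mul, abs_of_nonneg hφ]
  rw [Real.norm_eq_abs, h1t]
  have : |w t| * gaussianPDFReal 0 1 t ≤ (c₀ + c₁ * |t| + c₂ * t ^ 2) * gaussianPDFReal 0 1 t :=
    mul_le_mul_of_nonneg_right (hb t) hφ
  calc |w t| * gaussianPDFReal 0 1 t
      ≤ (c₀ + c₁ * |t| + c₂ * t ^ 2) * gaussianPDFReal 0 1 t := this
    _ = c₀ * gaussianPDFReal 0 1 t + c₁ * (|t| * gaussianPDFReal 0 1 t)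
        + c₂ * (|t| ^ 2 * gaussianPDFReal 0 1 t) := by rw [sq_abs]; ring

/-- One-dimensional Stein lemma / Gaussian integration by parts. -/
lemma stein1d {g g' : ℝ → ℝ} (hg : ∀ t, HasDerivAt g (g' t) t)
    (hg'c : Continuous g') {K : ℝ} (hK : ∀ t, |g' t| ≤ K) :
    ∫ t, t * g t ∂γ = ∫ t, g' t ∂γ := by
  have hgc : Continuous g := by
    rw [continuous_iff_continuousAt]; exact fun t => (hg t).continuousAt
  -- linear growth of g
  have hgrow : ∀ t, |g t| ≤ |g 0| + K * |t| := by
    intro t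
    have := Convex.norm_image_sub_le_of_norm_hasDerivWithin_le
      (f := g) (f' := g') (C := K) (s := Set.univ)
      (fun x _ => (hg x).hasDerivWithinAt)
      (fun x _ => by simpa [Real.norm_eq_abs] using hK x)
      convex_univ (Set.mem_univ 0) (Set.mem_univ t)
    simp only [Real.norm_eq_abs, sub_zero] at this
    calc |g t| ≤ |g t - g 0| + |g 0| := by
          simpa using abs_add_le (g t - g 0) (g 0)
      _ ≤ K * |t| + |g 0| := by linarith
      _ = |g 0| + K * |t| := by ring
  rw [integral_gauss (fun t => t * g t), integral_gauss g']
  have hu := hg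
  have hv : ∀ t : ℝ, HasDerivAt (fun s => -gaussianPDFReal 0 1 s)
      (t * gaussianPDFReal 0 1 t) t := by
    intro t
    exact (hasDerivAt_phi t).neg.congr_deriv (by ring)
  have hKnn : 0 ≤ K := le_trans (abs_nonneg _) (hK 0)
  have huv' : Integrable (fun t => g t * (t * gaussianPDFReal 0 1 t)) := by
    have : Integrable (fun t => (g t * t) * gaussianPDFReal 0 1 t) := by
      refine integrable_quad_phi ((hgc.mul continuous_id).aestronglyMeasurable) 0 |g 0| K ?_
      intro t
      have := hgrow t
      calc |g t * t| = |g t| * |t| := abs_mul _ _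
        _ ≤ (|g 0| + K * |t|) * |t| := by
            exact mul_le_mul_of_nonneg_right this (abs_nonneg t)
        _ = 0 + |g 0| * |t| + K * t ^ 2 := by rw [← sq_abs]; ring
    refine this.congr (ae_of_all _ fun t => by ring)
  have hu'v : Integrable (fun t => g' t * -gaussianPDFReal 0 1 t) := by
    have : Integrable (fun t => g' t * gaussianPDFReal 0 1 t) := by
      refine integrable_quad_phi hg'c.aestronglyMeasurable K 0 0 fun t => by
        simpa using hK t
    exact this.neg.congr (ae_of_all _ fun t => by simp)
  have huv : Integrable (fun t => g t * -gaussianPDFReal 0 1 t) := by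
    have : Integrable (fun t => g t * gaussianPDFReal 0 1 t) := by
      refine integrable_quad_phi hgc.aestronglyMeasurable |g 0| K 0 fun t => by
        simpa using hgrow t
    exact this.neg.congr (ae_of_all _ fun t => by simp)
  have key := integral_mul_deriv_eq_deriv_mul_of_integrable
    (u := g) (v := fun s => -gaussianPDFReal 0 1 s)
    (u' := g') (v' := fun t => t * gaussianPDFReal 0 1 t)
    (fun t _ => hu t) (fun t _ => hv t) huv' hu'v huv
  calc ∫ t, t * g t * gaussianPDFReal 0 1 t
      = ∫ t, g t * (t * gaussianPDFReal 0 1 t) := by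
        congr 1 with t; ring
    _ = -∫ t, g' t * -gaussianPDFReal 0 1 t := key
    _ = ∫ t, g' t * gaussianPDFReal 0 1 t := by
        rw [← integral_neg]; congr 1 with t; ring

lemma integrable_abs_pow_gauss (n : ℕ) : Integrable (fun t : ℝ => |t| ^ n) γ := by
  rw [integrable_gauss_iff (w := fun t : ℝ => |t| ^ n) ((continuous_abs.pow n).aestronglyMeasurable)]
  exact integrable_abs_pow_phi n

/-- Products of integrable functions of separate coordinates are integrable. -/
lemma integrable_fin_prod : ∀ {m : ℕ} (f : Fin m → ℝ → ℝ), (∀ l, Integrable (f l) γ) →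
    Integrable (fun x : Fin m → ℝ => ∏ l, f l (x l)) (Measure.pi fun _ => γ) := by
  intro m
  induction m with
  | zero =>
      intro f _
      simp only [Finset.univ_eq_empty, Finset.prod_empty]
      exact integrable_const 1
  | succ n ih =>
      intro f hf
      have mp := (measurePreserving_piFinSuccAbove (fun _ : Fin (n + 1) => γ) 0).symm
      rw [← mp.integrable_comp_emb (MeasurableEquiv.measurableEmbedding _)]
      simp_rw [MeasurableEquiv.piFinSuccAbove_symm_apply, Fin.insertNthEquiv,
        Fin.prod_univ_succ, Fin.insertNth_zero]
      simp only [Fin.zero_succAbove, cast_eq, Function.comp_def, Fin.cons_zero, Fin.cons_succ]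
      exact Integrable.mul_prod (hf 0) (ih (fun j => f j.succ) (fun j => hf j.succ))

lemma integrable_coord_pair {m : ℕ} (i j : Fin m) :
    Integrable (fun x : Fin m → ℝ => |x i| * |x j|) (Measure.pi fun _ => γ) := by
  classical
  have e0 : Integrable (fun _ : ℝ => (1 : ℝ)) γ := integrable_const 1
  have e1 : Integrable (fun t : ℝ => |t|) γ := by simpa using integrable_abs_pow_gauss 1
  have e2 : Integrable (fun t : ℝ => |t| * |t|) γ := by
    simpa [sq] using integrable_abs_pow_gauss 2
  have h : ∀ l : Fin m, Integrable
      (fun t : ℝ => (if l = i then |t| else 1) * (if l = j then |t| else 1)) γ := by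
    intro l
    by_cases hi : l = i
    · subst hi
      by_cases hj : l = j
      · subst hj
        simp only [if_pos rfl]; exact e2
      · simp only [if_pos rfl, if_neg hj, mul_one]; exact e1
    · by_cases hj : l = j
      · subst hj
        simp only [if_neg hi, if_pos rfl, one_mul]; exact e1
      · simp only [if_neg hi, if_neg hj, mul_one]; exact e0
  have hp := integrable_fin_prod _ h
  have heq : (fun x : Fin m → ℝ =>
      ∏ l, (if l = i then |x l| else 1) * (if l = j then |x l| else 1))
      = fun x => |x i| * |x j| := by
    funext x
    rw [Finset.prod_mul_distrib]
    congr 1 <;> simp [Finset.prod_ite_eq']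
  rwa [heq] at hp

lemma integrable_coord_abs {m : ℕ} (i : Fin m) :
    Integrable (fun x : Fin m → ℝ => |x i|) (Measure.pi fun _ => γ) := by
  classical
  have e0 : Integrable (fun _ : ℝ => (1 : ℝ)) γ := integrable_const 1
  have e1 : Integrable (fun t : ℝ => |t|) γ := by simpa using integrable_abs_pow_gauss 1
  have h : ∀ l : Fin m, Integrable (fun t : ℝ => if l = i then |t| else 1) γ := by
    intro l
    by_cases hi : l = i
    · subst hi; simp only [if_pos rfl]; exact e1
    · simp only [if_neg hi]; exact e0
  have hp := integrable_fin_prod _ h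
  have heq : (fun x : Fin m → ℝ => ∏ l, (if l = i then |x l| else 1))
      = fun x => |x i| := by
    funext x
    simp [Finset.prod_ite_eq']
  rwa [heq] at hp

/-- quadratic growth functions are integrable w.r.t. the product gaussian -/
lemma integrable_quad_pi {m : ℕ} {h : (Fin m → ℝ) → ℝ}
    (hc : AEStronglyMeasurable h (Measure.pi fun _ : Fin m => γ))
    (c₀ c₁ c₂ : ℝ)
    (hb : ∀ x, |h x| ≤ c₀ + c₁ * (∑ j, |x j|) + c₂ * (∑ j, |x j|) ^ 2) :
    Integrable h (Measure.pi fun _ : Fin m => γ) := by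
  have hdom : Integrable (fun x : Fin m → ℝ =>
      c₀ + c₁ * (∑ j, |x j|) + c₂ * (∑ i, ∑ j, |x i| * |x j|))
      (Measure.pi fun _ => γ) := by
    refine (Integrable.add ?_ ?_)
    · refine (integrable_const c₀).add ?_
      exact (integrable_finset_sum _ fun j _ => integrable_coord_abs j).const_mul c₁
    · refine Integrable.const_mul ?_ c₂
      exact integrable_finset_sum _ fun i _ =>
        integrable_finset_sum _ fun j _ => integrable_coord_pair i j
  refine hdom.mono' hc (ae_of_all _ fun x => ?_)
  have hsq : (∑ j, |x j|) ^ 2 = ∑ i, ∑ j, |x i| * |x j| := by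
    rw [sq, Finset.sum_mul_sum]
  rw [Real.norm_eq_abs]
  calc |h x| ≤ c₀ + c₁ * (∑ j, |x j|) + c₂ * (∑ j, |x j|) ^ 2 := hb x
    _ = c₀ + c₁ * (∑ j, |x j|) + c₂ * (∑ i, ∑ j, |x i| * |x j|) := by rw [hsq]

lemma norm_le_sum_abs {m : ℕ} (x : Fin m → ℝ) : ‖x‖ ≤ ∑ j, |x j| := by
  refine (pi_norm_le_iff_of_nonneg (by positivity)).2 fun i => ?_
  rw [Real.norm_eq_abs]
  exact Finset.single_le_sum (f := fun j => |x j|) (fun j _ => abs_nonneg _) (Finset.mem_univ i)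

/-- Multidimensional Stein lemma for the standard product Gaussian. -/
lemma steinPi {n : ℕ} (i : Fin (n + 1)) (h : (Fin (n + 1) → ℝ) → ℝ)
    (Dh : (Fin (n + 1) → ℝ) → ((Fin (n + 1) → ℝ) →L[ℝ] ℝ))
    (hD : ∀ x, HasFDerivAt h (Dh x) x)
    (hDc : Continuous fun x => Dh x (Pi.single i 1))
    {K : ℝ} (hK : ∀ x, ‖Dh x‖ ≤ K) :
    ∫ x, x i * h x ∂(Measure.pi fun _ : Fin (n + 1) => γ)
      = ∫ x, Dh x (Pi.single i 1) ∂(Measure.pi fun _ : Fin (n + 1) => γ) := by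
  classical
  set π1 : Measure (Fin (n + 1) → ℝ) := Measure.pi fun _ => γ with hπ1
  set π' : Measure (Fin n → ℝ) := Measure.pi fun _ => γ with hπ'
  have hKnn : 0 ≤ K := le_trans (norm_nonneg _) (hK 0)
  have hhc : Continuous h := by
    rw [continuous_iff_continuousAt]; exact fun x => (hD x).continuousAt
  -- growth bound on h
  have hgrow : ∀ x, |h x| ≤ |h 0| + K * ∑ j, |x j| := by
    intro x
    have hmvt := Convex.norm_image_sub_le_of_norm_hasFDerivWithin_le
      (f := h) (f' := Dh) (C := K) (s := Set.univ)
      (fun z _ => (hD z).hasFDerivWithinAt) (fun z _ => hK z)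
      convex_univ (Set.mem_univ 0) (Set.mem_univ x)
    simp only [Real.norm_eq_abs, sub_zero] at hmvt
    have : |h x| ≤ |h x - h 0| + |h 0| := by simpa using abs_add_le (h x - h 0) (h 0)
    have h2 : K * ‖x‖ ≤ K * ∑ j, |x j| :=
      mul_le_mul_of_nonneg_left (norm_le_sum_abs x) hKnn
    linarith
  -- the coordinate-splitting equivalence
  set e := MeasurableEquiv.piFinSuccAbove (fun _ : Fin (n + 1) => ℝ) i with he
  have mp : MeasurePreserving e π1 ((gaussianReal 0 1).prod π') :=
    measurePreserving_piFinSuccAbove (fun _ => γ) i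
  set ins : (Fin n → ℝ) → ℝ → (Fin (n + 1) → ℝ) :=
    fun y t => Fin.insertNth (α := fun _ => ℝ) i t y with hinsdef
  have hes : ∀ (t : ℝ) (y : Fin n → ℝ), e.symm (t, y) = ins y t := by
    intro t y; rfl
  -- affine structure of insertNth
  have haff : ∀ y : Fin n → ℝ, ins y
      = fun t : ℝ => ins y 0 + t • (Pi.single i 1 : Fin (n + 1) → ℝ) := by
    intro y; funext t; funext j
    refine Fin.succAboveCases i ?_ ?_ j
    · simp [hinsdef]
    · intro k
      simp [hinsdef, Fin.insertNth_apply_succAbove,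
        Pi.single_eq_of_ne (Fin.succAbove_ne i k)]
  have hins_cont : ∀ y : Fin n → ℝ, Continuous (ins y) := by
    intro y; rw [haff y]; fun_prop
  have hins_deriv : ∀ (y : Fin n → ℝ) (t : ℝ),
      HasDerivAt (ins y) (Pi.single i 1) t := by
    intro y t
    rw [haff y]
    simpa using ((hasDerivAt_id t).smul_const
      ((Pi.single i 1 : Fin (n+1) → ℝ))).const_add (ins y 0)
  -- Integrability of x i * h x
  have hint1 : Integrable (fun x => x i * h x) π1 := by
    refine integrable_quad_pi ((continuous_apply i).mul hhc).aestronglyMeasurable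
      0 |h 0| K ?_
    intro x
    have h1 : |x i * h x| = |x i| * |h x| := abs_mul _ _
    have h2 : |x i| ≤ ∑ j, |x j| :=
      Finset.single_le_sum (f := fun j => |x j|) (fun j _ => abs_nonneg _) (Finset.mem_univ i)
    have h3 : |x i| * |h x| ≤ (∑ j, |x j|) * (|h 0| + K * ∑ j, |x j|) :=
      mul_le_mul h2 (hgrow x) (abs_nonneg _) (by positivity)
    rw [h1]
    calc |x i| * |h x| ≤ (∑ j, |x j|) * (|h 0| + K * ∑ j, |x j|) := h3
      _ = 0 + |h 0| * (∑ j, |x j|) + K * (∑ j, |x j|) ^ 2 := by ring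
  have hsn : ‖(Pi.single i 1 : Fin (n+1) → ℝ)‖ ≤ 1 := by
    refine (pi_norm_le_iff_of_nonneg zero_le_one).2 fun j => ?_
    rcases eq_or_ne j i with rfl | hj
    · simp
    · simp [Pi.single_eq_of_ne hj]
  have hDb : ∀ z, |Dh z (Pi.single i 1)| ≤ K := by
    intro z
    calc |Dh z (Pi.single i 1)| ≤ ‖Dh z‖ * ‖(Pi.single i 1 : Fin (n+1) → ℝ)‖ :=
          (Dh z).le_opNorm _
      _ ≤ K * 1 := mul_le_mul (hK z) hsn (norm_nonneg _) hKnn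
      _ = K := mul_one K
  have hint2 : Integrable (fun x => Dh x (Pi.single i 1)) π1 := by
    refine integrable_quad_pi hDc.aestronglyMeasurable K 0 0 fun x => ?_
    simpa using hDb x
  -- transfer to the product measure
  have hcomp1 : ∫ x, x i * h x ∂π1
      = ∫ z : ℝ × (Fin n → ℝ), (e.symm z) i * h (e.symm z) ∂((gaussianReal 0 1).prod π') := by
    exact ((mp.symm e).integral_comp' (fun w => w i * h w)).symm
  have hcomp2 : ∫ x, Dh x (Pi.single i 1) ∂π1
      = ∫ z : ℝ × (Fin n → ℝ), Dh (e.symm z) (Pi.single i 1)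
          ∂((gaussianReal 0 1).prod π') := by
    exact ((mp.symm e).integral_comp' (fun w => Dh w (Pi.single i 1))).symm
  have hi1 : Integrable (fun z : ℝ × (Fin n → ℝ) => (e.symm z) i * h (e.symm z))
      ((gaussianReal 0 1).prod π') :=
    ((mp.symm e).integrable_comp_emb e.symm.measurableEmbedding).2 hint1
  have hi2 : Integrable (fun z : ℝ × (Fin n → ℝ) => Dh (e.symm z) (Pi.single i 1))
      ((gaussianReal 0 1).prod π') :=
    ((mp.symm e).integrable_comp_emb e.symm.measurableEmbedding).2 hint2
  rw [hcomp1, hcomp2, integral_prod_symm _ hi1, integral_prod_symm _ hi2]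
  refine integral_congr_ae (ae_of_all _ fun y => ?_)
  simp only [hes]
  have h1 : ∀ t : ℝ, (ins y t) i = t := fun t => by simp [hinsdef]
  simp only [h1]
  refine stein1d (g := fun t => h (ins y t))
    (g' := fun t => Dh (ins y t) (Pi.single i 1)) ?_ ?_ (K := K) ?_
  · intro t
    exact (hD (ins y t)).comp_hasDerivAt t (hins_deriv y t)
  · exact hDc.comp (hins_cont y)
  · intro t
    exact hDb (ins y t)


lemma integrable_mul_coord {m : ℕ} (i : Fin m) (h : (Fin m → ℝ) → ℝ)
    (Dh : (Fin m → ℝ) → ((Fin m → ℝ) →L[ℝ] ℝ)) (hD : ∀ x, HasFDerivAt h (Dh x) x)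
    {K : ℝ} (hK : ∀ x, ‖Dh x‖ ≤ K) :
    Integrable (fun x => x i * h x) (Measure.pi fun _ : Fin m => γ) := by
  have hKnn : 0 ≤ K := le_trans (norm_nonneg _) (hK 0)
  have hhc : Continuous h := by
    rw [continuous_iff_continuousAt]; exact fun x => (hD x).continuousAt
  have hgrow : ∀ x, |h x| ≤ |h 0| + K * ∑ j, |x j| := by
    intro x
    have hmvt := Convex.norm_image_sub_le_of_norm_hasFDerivWithin_le
      (f := h) (f' := Dh) (C := K) (s := Set.univ)
      (fun z _ => (hD z).hasFDerivWithinAt) (fun z _ => hK z)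
      convex_univ (Set.mem_univ 0) (Set.mem_univ x)
    simp only [Real.norm_eq_abs, sub_zero] at hmvt
    have h5 : |h x| ≤ |h x - h 0| + |h 0| := by simpa using abs_add_le (h x - h 0) (h 0)
    have h2 : K * ‖x‖ ≤ K * ∑ j, |x j| :=
      mul_le_mul_of_nonneg_left (norm_le_sum_abs x) hKnn
    linarith
  refine integrable_quad_pi ((continuous_apply i).mul hhc).aestronglyMeasurable
    0 |h 0| K ?_
  intro x
  have h1 : |x i * h x| = |x i| * |h x| := abs_mul _ _
  have h2 : |x i| ≤ ∑ j, |x j| :=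
    Finset.single_le_sum (f := fun j => |x j|) (fun j _ => abs_nonneg _) (Finset.mem_univ i)
  have h3 : |x i| * |h x| ≤ (∑ j, |x j|) * (|h 0| + K * ∑ j, |x j|) :=
    mul_le_mul h2 (hgrow x) (abs_nonneg _) (by positivity)
  rw [h1]
  calc |x i| * |h x| ≤ (∑ j, |x j|) * (|h 0| + K * ∑ j, |x j|) := h3
    _ = 0 + |h 0| * (∑ j, |x j|) + K * (∑ j, |x j|) ^ 2 := by ring


end OUAux

open OUAux

/-- symmetry of the Hessian matrix -/
lemma hessMat_symm {d : ℕ} {f : EuclideanSpace ℝ (Fin d) → ℝ} (hf : ContDiff ℝ 2 f)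
    (z : EuclideanSpace ℝ (Fin d)) (i j : Fin d) :
    hessMat f z i j = hessMat f z j i := by
  have hdiff : ∀ y, HasFDerivAt f (fderiv ℝ f y) y := fun y =>
    ((hf.differentiable (by norm_num)) y).hasFDerivAt
  have hfd1 : ContDiff ℝ 1 (fderiv ℝ f) := hf.fderiv_right (by norm_num)
  have hx : HasFDerivAt (fderiv ℝ f) (fderiv ℝ (fderiv ℝ f) z) z :=
    ((hfd1.differentiable one_ne_zero) z).hasFDerivAt
  have hsymm := second_derivative_symmetric hdiff hx
  -- express hess via the second derivative
  have hgrad : (fun y => gradient f y)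
      = fun y => (InnerProductSpace.toDual ℝ _).symm (fderiv ℝ f y) := rfl
  have hhess : ∀ u : EuclideanSpace ℝ (Fin d),
      hess f z u = (InnerProductSpace.toDual ℝ _).symm (fderiv ℝ (fderiv ℝ f) z u) := by
    intro u
    have h5 : hess f z = fderiv ℝ
        (⇑(InnerProductSpace.toDual ℝ (EuclideanSpace ℝ (Fin d))).symm ∘ (fderiv ℝ f)) z := by
      rw [hess, hgrad]; rfl
    rw [h5, LinearIsometryEquiv.comp_fderiv]
    rfl
  have hinner : ∀ u v : EuclideanSpace ℝ (Fin d),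
      ⟪u, hess f z v⟫ = fderiv ℝ (fderiv ℝ f) z v u := by
    intro u v
    rw [hhess v, real_inner_comm, InnerProductSpace.toDual_symm_apply]
  simp only [hessMat, Matrix.of_apply]
  rw [hinner, hinner, hsymm]

set_option maxHeartbeats 1000000 in
/-- Lemma 2.2 (stationarity of the O-U process): if `Σ` is symmetric positive definite and
solves the Lyapunov equation `ΣAᵀ + AΣ + BBᵀ = 0`, and `Z̃ ~ N(0,Σ)`, then the expectation of
the O-U generator `∇f(Z̃)ᵀAZ̃ + (1/2)Tr(∇²f(Z̃)BBᵀ)` vanishes for every twice continuously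
differentiable `f : ℝ^d → ℝ` with bounded Hessian. -/
theorem ou_generator_mean_zero {d : ℕ} (A B S : Matrix (Fin d) (Fin d) ℝ)
    (hS : S.PosDef) (hLyap : S * Aᵀ + A * S + B * Bᵀ = 0)
    (f : EuclideanSpace ℝ (Fin d) → ℝ) (hf : ContDiff ℝ 2 f)
    (M : ℝ) (hbdd : ∀ x, ‖hess f x‖ ≤ M) :
    ∫ z, (⟪gradient f z, mulVecE A z⟫ + (1/2) * (hessMat f z * (B * Bᵀ)).trace)
        ∂(gaussianCov hS.posSemidef) = 0 := by

  classical
  obtain rfl | ⟨n, rfl⟩ : d = 0 ∨ ∃ n, d = n + 1 := by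
    cases d with
    | zero => exact Or.inl rfl
    | succ n => exact Or.inr ⟨n, rfl⟩
  · -- dimension 0
    have hzero : ∀ z : EuclideanSpace ℝ (Fin 0),
        (⟪gradient f z, mulVecE A z⟫ + (1/2) * (hessMat f z * (B * Bᵀ)).trace) = 0 := by
      intro z
      have h1 : ⟪gradient f z, mulVecE A z⟫ = (0:ℝ) := by
        rw [PiLp.inner_apply]
        simp
      have h2 : (hessMat f z * (B * Bᵀ)).trace = 0 := by
        simp [Matrix.trace]
      rw [h1, h2]; ring
    simp only [hzero, integral_zero]
  -- main case
  -- regularity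
  have hMnn : 0 ≤ M := le_trans (norm_nonneg _) (hbdd 0)
  have hf1 : ContDiff ℝ 1 (gradient f) := by
    have hfd : ContDiff ℝ 1 (fderiv ℝ f) := hf.fderiv_right (by norm_num)
    exact ((InnerProductSpace.toDual ℝ _).symm.contDiff).comp hfd
  have hgc : Continuous (gradient f) := hf1.continuous
  have hgradFD : ∀ z, HasFDerivAt (gradient f) (hess f z) z := fun z =>
    ((hf1.differentiable one_ne_zero) z).hasFDerivAt
  have hhessc : Continuous (hess f) := hf1.continuous_fderiv one_ne_zero
  have happ : ∀ v : EuclideanSpace ℝ (Fin (n+1)),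
      Continuous fun z => hess f z v := fun v =>
    (ContinuousLinearMap.apply ℝ (EuclideanSpace ℝ (Fin (n+1))) v).continuous.comp hhessc
  -- matrices
  set C : Matrix (Fin (n+1)) (Fin (n+1)) ℝ :=
    ((hS.posSemidef.1.eigenvectorUnitary : Matrix (Fin (n+1)) (Fin (n+1)) ℝ) *
      Matrix.diagonal ((↑) ∘ (fun x : ℝ => √x) ∘ hS.posSemidef.1.eigenvalues) *
      (star hS.posSemidef.1.eigenvectorUnitary : Matrix (Fin (n+1)) (Fin (n+1)) ℝ)) with hCdef
  have hCherm : C.IsHermitian := by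
    simp only [hCdef, Matrix.IsHermitian, Matrix.conjTranspose_mul, Matrix.diagonal_conjTranspose,
      Matrix.star_eq_conjTranspose, Matrix.conjTranspose_conjTranspose, Matrix.mul_assoc]
    congr 2
  have hCsymm : Cᵀ = C := by
    have := hCherm
    rwa [Matrix.IsHermitian, Matrix.conjTranspose_eq_transpose_of_trivial] at this
  have hCC : C * C = S := by
    conv_rhs => rw [hS.posSemidef.1.spectral_theorem, Unitary.conjStarAlgAut_apply]
    have hU := Unitary.coe_star_mul_self hS.posSemidef.1.eigenvectorUnitary
    simp only [hCdef]
    rw [show ∀ a b c e f g : Matrix (Fin (n+1)) (Fin (n+1)) ℝ,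
        a * b * c * (e * f * g) = a * (b * (c * e) * f) * g
      from fun a b c e f g => by simp only [Matrix.mul_assoc], hU, Matrix.mul_one,
      Matrix.diagonal_mul_diagonal]
    congr 2
    ext i j
    by_cases hij : i = j
    · subst hij
      simp [Real.mul_self_sqrt (hS.posSemidef.eigenvalues_nonneg i)]
    · simp [Matrix.diagonal_apply_ne _ hij]
  have hSsymm : Sᵀ = S := by
    have := hS.posSemidef.1
    rwa [Matrix.IsHermitian, Matrix.conjTranspose_eq_transpose_of_trivial] at this
  have hBB : B * Bᵀ = -(S * Aᵀ) - A * S := by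
    have h2 : B * Bᵀ = -(S * Aᵀ + A * S) := eq_neg_of_add_eq_zero_right hLyap
    rw [h2, neg_add, ← sub_eq_add_neg]
  -- continuous linear maps
  have hmulVecEc : ∀ M₀ : Matrix (Fin (n+1)) (Fin (n+1)) ℝ, Continuous (mulVecE M₀) := by
    intro M₀
    have h1 : Continuous (M₀.mulVecLin) := M₀.mulVecLin.continuous_of_finiteDimensional
    have : mulVecE M₀ = fun x => (EuclideanSpace.equiv (Fin (n+1)) ℝ).symm
        (M₀.mulVecLin ((EuclideanSpace.equiv (Fin (n+1)) ℝ) x)) := rfl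
    rw [this]
    exact ((EuclideanSpace.equiv (Fin (n+1)) ℝ).symm.continuous).comp
      (h1.comp (EuclideanSpace.equiv (Fin (n+1)) ℝ).continuous)
  set eqd := EuclideanSpace.equiv (Fin (n+1)) ℝ with heqd
  set Tclm : (Fin (n+1) → ℝ) →L[ℝ] EuclideanSpace ℝ (Fin (n+1)) :=
    (eqd.symm.toContinuousLinearMap).comp
      (LinearMap.toContinuousLinearMap (Matrix.mulVecLin C)) with hTdef
  have hTapp : ∀ x, Tclm x = eqd.symm (C.mulVec x) := fun x => rfl
  -- the integrand
  set F : EuclideanSpace ℝ (Fin (n+1)) → ℝ := fun z =>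
    ⟪gradient f z, mulVecE A z⟫ + (1/2) * (hessMat f z * (B * Bᵀ)).trace with hFdef
  have hHMc : ∀ i j, Continuous fun z => hessMat f z i j := by
    intro i j
    exact Continuous.inner continuous_const (happ (EuclideanSpace.single j 1))
  have hFc : Continuous F := by
    refine Continuous.add (Continuous.inner hgc (hmulVecEc A)) (Continuous.mul
      continuous_const ?_)
    have : (fun z => (hessMat f z * (B * Bᵀ)).trace)
        = fun z => ∑ i, ∑ j, hessMat f z i j * (B * Bᵀ) j i := by
      funext z
      simp [Matrix.trace, Matrix.mul_apply, Matrix.diag]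
    rw [this]
    refine continuous_finset_sum _ fun i _ => continuous_finset_sum _ fun j _ =>
      Continuous.mul (hHMc i j) continuous_const
  -- pushforward reduction
  set π1 : Measure (Fin (n+1) → ℝ) := Measure.pi fun _ => γ with hπ1
  have hmap : ∫ z, F z ∂(gaussianCov hS.posSemidef) = ∫ x, F (Tclm x) ∂π1 := by
    rw [gaussianCov, _root_.stdGaussian, integral_map ((hmulVecEc C).measurable.aemeasurable)
      hFc.aestronglyMeasurable,
      integral_map (eqd.symm.continuous.measurable.aemeasurable)
      (Continuous.aestronglyMeasurable
        (show Continuous fun z => F (mulVecE C z) from hFc.comp (hmulVecEc C)))]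
    congr 1
  rw [hmap]
  -- the component functions
  set G : (Fin (n+1) → ℝ) → EuclideanSpace ℝ (Fin (n+1)) := fun x => gradient f (Tclm x)
    with hGdef
  set wv : Fin (n+1) → EuclideanSpace ℝ (Fin (n+1)) :=
    fun k => eqd.symm (fun i => (A * C) i k) with hwvdef
  set gfun : Fin (n+1) → (Fin (n+1) → ℝ) → ℝ := fun k x => ⟪wv k, G x⟫ with hgfdef
  have hwv_coord : ∀ k i, (wv k) i = (A * C) i k := fun k i => rfl
  -- decomposition of the first term
  have hinner_eq : ∀ x, ⟪G x, mulVecE A (Tclm x)⟫ = ∑ k, x k * gfun k x := by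
    intro x
    have hm : mulVecE A (Tclm x) = eqd.symm ((A * C).mulVec x) := by
      rw [hTapp]
      simp only [mulVecE]
      congr 1
      rw [show eqd (eqd.symm (C.mulVec x)) = C.mulVec x from eqd.apply_symm_apply _]
      rw [← Matrix.mulVec_mulVec (M := A) (N := C)]
    rw [hm, PiLp.inner_apply]
    simp only [Real.inner_apply]
    have hcoord : ∀ i, (eqd.symm ((A * C).mulVec x)) i = ∑ k, (A * C) i k * x k := by
      intro i
      show ((A * C).mulVec x) i = _
      simp [Matrix.mulVec, dotProduct]
    calc ∑ i, (G x) i * (eqd.symm ((A * C).mulVec x)) i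
        = ∑ i, ∑ k, x k * ((A * C) i k * (G x) i) := by
          refine Finset.sum_congr rfl fun i _ => ?_
          rw [hcoord i, Finset.mul_sum]
          exact Finset.sum_congr rfl fun k _ => by ring
      _ = ∑ k, ∑ i, x k * ((A * C) i k * (G x) i) := Finset.sum_comm
      _ = ∑ k, x k * gfun k x := by
          refine Finset.sum_congr rfl fun k _ => ?_
          have hg : gfun k x = ∑ i, (A * C) i k * (G x) i := by
            simp only [hgfdef]
            rw [PiLp.inner_apply]
            refine Finset.sum_congr rfl fun i _ => ?_
            rw [show ((wv k : EuclideanSpace ℝ (Fin (n+1))) i) = (A * C) i k from rfl]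
            exact Real.inner_apply _ _
          rw [hg, Finset.mul_sum]
  -- derivative data for gfun k
  set Dg : Fin (n+1) → (Fin (n+1) → ℝ) → ((Fin (n+1) → ℝ) →L[ℝ] ℝ) := fun k x =>
    ((innerSL ℝ (wv k)).comp (hess f (Tclm x))).comp Tclm with hDgdef
  have hDgD : ∀ k x, HasFDerivAt (gfun k) (Dg k x) x := by
    intro k x
    have h1 : HasFDerivAt (gradient f) (hess f (Tclm x)) (Tclm x) := hgradFD _
    have h2 : HasFDerivAt (fun y : Fin (n+1) → ℝ => Tclm y) Tclm x := Tclm.hasFDerivAt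
    have h3 := ((innerSL ℝ (wv k)).hasFDerivAt.comp (Tclm x) h1).comp x h2
    exact h3
  have hDgK : ∀ k x, ‖Dg k x‖ ≤ ‖wv k‖ * M * ‖Tclm‖ := by
    intro k x
    calc ‖Dg k x‖ ≤ ‖(innerSL ℝ (wv k)).comp (hess f (Tclm x))‖ * ‖Tclm‖ :=
        ContinuousLinearMap.opNorm_comp_le _ _
      _ ≤ (‖innerSL ℝ (wv k)‖ * ‖hess f (Tclm x)‖) * ‖Tclm‖ := by
          exact mul_le_mul_of_nonneg_right (ContinuousLinearMap.opNorm_comp_le _ _)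
            (norm_nonneg _)
      _ ≤ (‖wv k‖ * M) * ‖Tclm‖ := by
          refine mul_le_mul_of_nonneg_right ?_ (norm_nonneg _)
          rw [innerSL_apply_norm]
          exact mul_le_mul_of_nonneg_left (hbdd _) (norm_nonneg _)
      _ = ‖wv k‖ * M * ‖Tclm‖ := rfl
  have hDgc : ∀ k i₀, Continuous fun x => Dg k x (Pi.single i₀ 1) := by
    intro k i₀
    have : (fun x => Dg k x (Pi.single i₀ 1))
        = fun x => ⟪wv k, hess f (Tclm x) (Tclm (Pi.single i₀ 1))⟫ := rfl
    rw [this]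
    exact Continuous.inner continuous_const
      ((ContinuousLinearMap.apply ℝ (EuclideanSpace ℝ (Fin (n+1)))
        (Tclm (Pi.single i₀ 1))).continuous.comp (hhessc.comp Tclm.continuous))
  -- integrability of pieces
  have hint_k : ∀ k, Integrable (fun x => x k * gfun k x) π1 := fun k =>
    integrable_mul_coord k (gfun k) (Dg k) (hDgD k) (hDgK k)
  have hprob : IsProbabilityMeasure π1 := by infer_instance
  set wfun : (Fin (n+1) → ℝ) → ℝ := fun x =>
    (1/2) * (hessMat f (Tclm x) * (B * Bᵀ)).trace with hwfdef
  have hHb : ∀ z i j, |hessMat f z i j| ≤ M := by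
    intro z i j
    have h1 : |⟪EuclideanSpace.single i (1:ℝ), hess f z (EuclideanSpace.single j 1)⟫|
        ≤ ‖EuclideanSpace.single i (1:ℝ)‖ * ‖hess f z (EuclideanSpace.single j 1)‖ :=
      abs_real_inner_le_norm _ _
    have h2 : ‖hess f z (EuclideanSpace.single j (1:ℝ))‖
        ≤ ‖hess f z‖ * ‖EuclideanSpace.single j (1:ℝ)‖ := (hess f z).le_opNorm _
    rw [EuclideanSpace.norm_single] at h1 h2
    simp only [norm_one, one_mul, mul_one] at h1 h2
    exact h1.trans (h2.trans (hbdd z))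
  set Mw : ℝ := (1/2) * ∑ i, ∑ j, M * |(B * Bᵀ) j i| with hMwdef
  have hwb : ∀ x, |wfun x| ≤ Mw := by
    intro x
    rw [hwfdef, hMwdef]
    simp only [abs_mul, abs_of_nonneg (by norm_num : (0:ℝ) ≤ 1/2)]
    refine mul_le_mul_of_nonneg_left ?_ (by norm_num)
    have htr : (hessMat f (Tclm x) * (B * Bᵀ)).trace
        = ∑ i, ∑ j, hessMat f (Tclm x) i j * (B * Bᵀ) j i := by
      simp [Matrix.trace, Matrix.mul_apply, Matrix.diag]
    rw [htr]
    calc |∑ i, ∑ j, hessMat f (Tclm x) i j * (B * Bᵀ) j i|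
        ≤ ∑ i, |∑ j, hessMat f (Tclm x) i j * (B * Bᵀ) j i| := Finset.abs_sum_le_sum_abs _ _
      _ ≤ ∑ i, ∑ j, |hessMat f (Tclm x) i j * (B * Bᵀ) j i| :=
          Finset.sum_le_sum fun i _ => Finset.abs_sum_le_sum_abs _ _
      _ ≤ ∑ i, ∑ j, M * |(B * Bᵀ) j i| := by
          refine Finset.sum_le_sum fun i _ => Finset.sum_le_sum fun j _ => ?_
          rw [abs_mul]
          exact mul_le_mul_of_nonneg_right (hHb _ i j) (abs_nonneg _)
  have hwc : Continuous wfun := by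
    refine Continuous.mul continuous_const ?_
    have : (fun x => (hessMat f (Tclm x) * (B * Bᵀ)).trace)
        = fun x => ∑ i, ∑ j, hessMat f (Tclm x) i j * (B * Bᵀ) j i := by
      funext x
      simp [Matrix.trace, Matrix.mul_apply, Matrix.diag]
    rw [this]
    exact continuous_finset_sum _ fun i _ => continuous_finset_sum _ fun j _ =>
      Continuous.mul ((hHMc i j).comp Tclm.continuous) continuous_const
  have hwint : Integrable wfun π1 :=
    (integrable_const Mw).mono' hwc.aestronglyMeasurable
      (ae_of_all _ fun x => by simpa using hwb x)
  have hDint : ∀ k, Integrable (fun x => Dg k x (Pi.single k 1)) π1 := by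
    intro k
    refine (integrable_const (‖wv k‖ * M * ‖Tclm‖)).mono'
      (hDgc k k).aestronglyMeasurable (ae_of_all _ fun x => ?_)
    have h1 : ‖Dg k x (Pi.single k 1)‖ ≤ ‖Dg k x‖ * ‖(Pi.single k 1 : Fin (n+1) → ℝ)‖ :=
      (Dg k x).le_opNorm _
    have hsn : ‖(Pi.single k 1 : Fin (n+1) → ℝ)‖ ≤ 1 := by
      refine (pi_norm_le_iff_of_nonneg zero_le_one).2 fun j => ?_
      rcases eq_or_ne j k with rfl | hj
      · simp
      · simp [Pi.single_eq_of_ne hj]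
    have hDnn : (0:ℝ) ≤ ‖Dg k x‖ := norm_nonneg _
    calc ‖Dg k x (Pi.single k 1)‖ ≤ ‖Dg k x‖ * 1 := by
          refine h1.trans (mul_le_mul_of_nonneg_left hsn hDnn)
      _ = ‖Dg k x‖ := mul_one _
      _ ≤ ‖wv k‖ * M * ‖Tclm‖ := hDgK k x
  -- split the integral
  have hsplit : ∫ x, F (Tclm x) ∂π1
      = (∑ k, ∫ x, x k * gfun k x ∂π1) + ∫ x, wfun x ∂π1 := by
    have hFeq : ∀ x, F (Tclm x) = (∑ k, x k * gfun k x) + wfun x := by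
      intro x
      rw [hFdef]
      simp only [hwfdef]
      rw [← hinner_eq x]
    rw [integral_congr_ae (ae_of_all _ hFeq),
      integral_add (integrable_finset_sum _ fun k _ => hint_k k) hwint,
      integral_finset_sum _ fun k _ => hint_k k]
  rw [hsplit]
  -- apply Stein's lemma in each coordinate
  have hstein : ∀ k, ∫ x, x k * gfun k x ∂π1 = ∫ x, Dg k x (Pi.single k 1) ∂π1 := fun k =>
    steinPi k (gfun k) (Dg k) (hDgD k) (hDgc k k) (hDgK k)
  simp only [hstein]
  rw [← integral_finset_sum _ fun k _ => hDint k, ← integral_add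
    (integrable_finset_sum _ fun k _ => hDint k) hwint]
  -- pointwise cancellation
  have hkey : ∀ x, (∑ k, Dg k x (Pi.single k 1)) + wfun x = 0 := by
    intro x
    set H := hessMat f (Tclm x) with hHdef
    have hHsymm : ∀ i j, H i j = H j i := fun i j => hessMat_symm hf (Tclm x) i j
    have hHu : ∀ i j, H i j = (hess f (Tclm x) (EuclideanSpace.single j 1)) i := by
      intro i j
      show ⟪EuclideanSpace.single i (1:ℝ), hess f (Tclm x) (EuclideanSpace.single j 1)⟫ = _
      rw [EuclideanSpace.inner_single_left]
      simp
    have hwinner : ∀ k (u : EuclideanSpace ℝ (Fin (n+1))),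
        ⟪wv k, u⟫ = ∑ i, (A * C) i k * u i := by
      intro k u
      rw [PiLp.inner_apply]
      refine Finset.sum_congr rfl fun i _ => ?_
      rw [show ((wv k : EuclideanSpace ℝ (Fin (n+1))) i) = (A * C) i k from rfl]
      exact Real.inner_apply _ _
    -- computing the Stein terms
    have hterm : ∀ k, Dg k x (Pi.single k 1) = ∑ i, ∑ j, (A * C) i k * (C j k * H i j) := by
      intro k
      have h0 : Dg k x (Pi.single k 1) = ⟪wv k, hess f (Tclm x) (Tclm (Pi.single k 1))⟫ := rfl
      have h1 : Tclm (Pi.single k 1) = eqd.symm (fun j => C j k) := by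
        rw [hTapp]
        exact congrArg _ (by rw [Matrix.mulVec_single_one]; rfl)
      have hdecomp : (eqd.symm (fun j => C j k) : EuclideanSpace ℝ (Fin (n+1)))
          = ∑ j, (C j k) • EuclideanSpace.single j (1:ℝ) := by
        apply eqd.injective
        rw [map_sum]
        funext i
        have h2 : ∀ j, eqd ((C j k) • EuclideanSpace.single j (1:ℝ))
            = (C j k) • (Pi.single j 1 : Fin (n + 1) → ℝ) := by
          intro j
          rw [_root_.map_smul]
          rfl
        simp only [h2]
        rw [eqd.apply_symm_apply]
        rw [Finset.sum_apply]
        simp [Pi.single_apply]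
      have h3 : ∀ j, ⟪wv k, hess f (Tclm x) ((C j k) • EuclideanSpace.single j (1:ℝ))⟫
          = ∑ i, C j k * ((A * C) i k * H i j) := by
        intro j
        rw [_root_.map_smul, real_inner_smul_right, hwinner, Finset.mul_sum]
        refine Finset.sum_congr rfl fun i _ => ?_
        rw [← hHu i j]
      rw [h0, h1, hdecomp, map_sum, inner_sum,
        Finset.sum_congr rfl fun j _ => h3 j, Finset.sum_comm]
      exact Finset.sum_congr rfl fun i _ => Finset.sum_congr rfl fun j _ => by ring
    have hSe : ∀ a b, S b a = S a b := by
      intro a b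
      have := congrFun (congrFun hSsymm a) b
      rw [Matrix.transpose_apply] at this
      exact this
    have hSAT : ∀ i j, (S * Aᵀ) j i = (A * S) i j := by
      intro i j
      rw [Matrix.mul_apply, Matrix.mul_apply]
      refine Finset.sum_congr rfl fun l _ => ?_
      rw [Matrix.transpose_apply, hSe l j]
      ring
    have hACC : ∀ i j, (∑ k, (A * C) i k * C j k) = (A * S) i j := by
      intro i j
      have h1 : (A * C * Cᵀ) i j = ∑ k, (A * C) i k * C j k := by
        rw [Matrix.mul_apply]
        exact Finset.sum_congr rfl fun k _ => by rw [Matrix.transpose_apply]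
      rw [← h1, Matrix.mul_assoc, hCsymm, hCC]
    set T : ℝ := ∑ i, ∑ j, H i j * (A * S) i j with hTsum
    have hsum1 : ∑ k, Dg k x (Pi.single k 1) = T := by
      rw [Finset.sum_congr rfl fun k _ => hterm k]
      rw [Finset.sum_comm]
      refine Finset.sum_congr rfl fun i _ => ?_
      rw [Finset.sum_comm]
      refine Finset.sum_congr rfl fun j _ => ?_
      rw [← hACC i j, Finset.mul_sum]
      refine Finset.sum_congr rfl fun k _ => by ring
    have hswap : ∑ i, ∑ j, H i j * (A * S) j i = T := by
      rw [hTsum, Finset.sum_comm]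
      refine Finset.sum_congr rfl fun j _ => Finset.sum_congr rfl fun i _ => ?_
      rw [hHsymm j i]
    have htr : wfun x = (1/2) * (∑ i, ∑ j, H i j * (-((A * S) i j) - (A * S) j i)) := by
      simp only [hwfdef]
      congr 1
      rw [show (hessMat f (Tclm x) * (B * Bᵀ)).trace
          = ∑ i, ∑ j, H i j * (B * Bᵀ) j i from by
        simp [Matrix.trace, Matrix.mul_apply, Matrix.diag, hHdef]]
      refine Finset.sum_congr rfl fun i _ => Finset.sum_congr rfl fun j _ => ?_
      congr 1
      rw [hBB]
      rw [Matrix.sub_apply, Matrix.neg_apply, hSAT i j]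
    have hfin : ∑ i, ∑ j, H i j * (-((A * S) i j) - (A * S) j i) = -T - T := by
      have h4 : ∀ i, ∑ j, H i j * (-((A * S) i j) - (A * S) j i)
          = -(∑ j, H i j * (A * S) i j) - ∑ j, H i j * (A * S) j i := by
        intro i
        rw [← Finset.sum_neg_distrib, ← Finset.sum_sub_distrib]
        refine Finset.sum_congr rfl fun j _ => by ring
      rw [Finset.sum_congr rfl fun i _ => h4 i, Finset.sum_sub_distrib,
        Finset.sum_neg_distrib, hswap, ← hTsum]
    rw [hsum1, htr, hfin]
    ring
  rw [integral_congr_ae (ae_of_all _ hkey), integral_zero]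


end
end

section
/- Under Assumption 3.1, there exists a constant K (depending on K₁, ρ, M_V, P and Σ_∞) such that for all k ≥ 1, ‖ Σ_∞^{−1/2} E(Σ_k) Σ_∞^{−1/2} − I ‖_HS ≤ K ρ^k; in particular, E(Σ_k) converges to Σ_∞ geometrically fast. Here E(Σ_k) = Σ_{i,j∈S} p_i(k) P_{ij} (V(j) − E(V(X₁)|X₀=i))(V(j) − E(V(X₁)|X₀=i))ᵀ, where p_i(k) = Prob(X_k = i). -/
open MeasureTheory ProbabilityTheory
open scoped BigOperators NNReal ENNReal RealInnerProductSpace Matrix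

noncomputable section

open scoped Classical

/-- The `n`-step transition probabilities of a transition matrix `Ptr` on a countable state
space. -/
def nstep {S : Type} (Ptr : S → S → ℝ) : ℕ → S → S → ℝ
  | 0 => fun x y => if x = y then 1 else 0
  | n + 1 => fun x y => ∑' z, nstep Ptr n x z * Ptr z y

/-- The square root of a positive semidefinite matrix, as `Matrix.PosSemidef.sqrt` was defined in
Mathlib (December 2024); it has since been removed from Mathlib. -/
noncomputable def Matrix.PosSemidef.sqrt {n : Type*} [Fintype n] [DecidableEq n]
    {A : Matrix n n ℝ} (hA : A.PosSemidef) : Matrix n n ℝ :=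
  hA.1.eigenvectorUnitary.1 * Matrix.diagonal ((↑) ∘ (√·) ∘ hA.1.eigenvalues) *
    (star hA.1.eigenvectorUnitary : Matrix n n ℝ)

/-- The Hilbert–Schmidt (Frobenius) norm of a `d × d` matrix. -/
noncomputable def hsNorm {d : ℕ} (M : Matrix (Fin d) (Fin d) ℝ) : ℝ :=
  Real.sqrt (∑ i : Fin d, ∑ j : Fin d, (M i j) ^ 2)

lemma Matrix.PosSemidef.sqrt_mul_self' {n : Type*} [Fintype n] [DecidableEq n]
    {A : Matrix n n ℝ} (hA : A.PosSemidef) : hA.sqrt * hA.sqrt = A := by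
  have hU : (star hA.1.eigenvectorUnitary : Matrix n n ℝ) * hA.1.eigenvectorUnitary.1 = 1 :=
    Unitary.coe_star_mul_self _
  conv_rhs => rw [hA.1.spectral_theorem, Unitary.conjStarAlgAut_apply]
  unfold Matrix.PosSemidef.sqrt
  set U : Matrix n n ℝ := hA.1.eigenvectorUnitary.1
  set Us : Matrix n n ℝ := (star hA.1.eigenvectorUnitary : Matrix n n ℝ)
  have e : ∀ D : Matrix n n ℝ, U * D * Us * (U * D * Us) = U * (D * (Us * U) * D) * Us := by
    intro D; simp only [mul_assoc]
  rw [e, hU, Matrix.mul_one, Matrix.diagonal_mul_diagonal]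
  congr 3
  funext i
  simp [Real.mul_self_sqrt (hA.eigenvalues_nonneg i)]

section aux
set_option linter.unusedSectionVars false
set_option linter.unusedVariables false
set_option maxHeartbeats 1000000
variable {S : Type} [Countable S] {Ptr : S → S → ℝ}

lemma summable_of_nonneg_of_tsum_eq_one {f : S → ℝ} (h0 : ∀ x, 0 ≤ f x)
    (h1 : ∑' x, f x = 1) : Summable f := by
  by_contra h
  rw [tsum_eq_zero_of_not_summable h] at h1
  norm_num at h1

lemma le_one_of_row {f : S → ℝ} (h0 : ∀ x, 0 ≤ f x) (h1 : ∑' x, f x = 1) (y : S) :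
    f y ≤ 1 := by
  have hs := summable_of_nonneg_of_tsum_eq_one h0 h1
  have := Summable.le_tsum hs y fun b _ => h0 b
  rwa [h1] at this

lemma nstep_succ (n : ℕ) (x y : S) :
    nstep Ptr (n+1) x y = ∑' z, nstep Ptr n x z * Ptr z y := rfl

lemma nstep_nonneg (hPnn : ∀ x y, 0 ≤ Ptr x y) : ∀ n x y, 0 ≤ nstep Ptr n x y := by
  intro n
  induction n with
  | zero => intro x y; unfold nstep; positivity
  | succ n ih =>
    intro x y; unfold nstep
    exact tsum_nonneg fun z => mul_nonneg (ih x z) (hPnn z y)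

lemma nstep_row (hPnn : ∀ x y, 0 ≤ Ptr x y) (hPsum : ∀ x, ∑' y, Ptr x y = 1) :
    ∀ n x, Summable (nstep Ptr n x) ∧ ∑' y, nstep Ptr n x y = 1 := by
  intro n
  induction n with
  | zero =>
    intro x
    have h : HasSum (nstep Ptr 0 x) 1 := by
      have he : nstep Ptr 0 x = fun y => if y = x then (1:ℝ) else 0 := by
        funext y; unfold nstep; simp [eq_comm]
      rw [he]
      exact hasSum_ite_eq x 1
    exact ⟨h.summable, h.tsum_eq⟩
  | succ n ih =>
    intro x
    obtain ⟨hsum, htot⟩ := ih x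
    have hnn : (0 : S × S → ℝ) ≤ fun p => nstep Ptr n x p.1 * Ptr p.1 p.2 :=
      fun p => mul_nonneg (nstep_nonneg hPnn n x p.1) (hPnn p.1 p.2)
    have hF : Summable (fun p : S × S => nstep Ptr n x p.1 * Ptr p.1 p.2) := by
      rw [summable_prod_of_nonneg hnn]
      constructor
      · intro z
        have h := (summable_of_nonneg_of_tsum_eq_one (hPnn z) (hPsum z)).mul_left
          (nstep Ptr n x z)
        exact h
      apply hsum.congr
      intro z
      simp only [tsum_mul_left, hPsum z, mul_one]
    have hswap : ∀ y, Summable fun z => nstep Ptr n x z * Ptr z y := by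
      intro y
      apply hsum.of_nonneg_of_le
        (fun z => mul_nonneg (nstep_nonneg hPnn n x z) (hPnn z y))
      intro z
      have h1 : Ptr z y ≤ 1 := le_one_of_row (hPnn z) (hPsum z) y
      have := mul_le_mul_of_nonneg_left h1 (nstep_nonneg hPnn n x z)
      rwa [mul_one] at this
    have hFs : Summable (fun p : S × S => nstep Ptr n x p.2 * Ptr p.2 p.1) := hF.prod_symm
    have hnn' : ∀ p : S × S, 0 ≤ nstep Ptr n x p.2 * Ptr p.2 p.1 :=
      fun p => mul_nonneg (nstep_nonneg hPnn n x p.2) (hPnn p.2 p.1)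
    have hcol : ∀ z, Summable fun y => nstep Ptr n x z * Ptr z y := by
      intro z
      have h := (summable_of_nonneg_of_tsum_eq_one (hPnn z) (hPsum z)).mul_left
        (nstep Ptr n x z)
      exact h
    have hrow : Summable (nstep Ptr (n+1) x) := by
      have h2 := ((summable_prod_of_nonneg hnn').1 hFs).2
      apply h2.congr
      intro y
      rw [nstep_succ]
    refine ⟨hrow, ?_⟩
    have he : ∑' y, nstep Ptr (n+1) x y = ∑' y, ∑' z, nstep Ptr n x z * Ptr z y :=
      tsum_congr fun y => nstep_succ n x y
    rw [he, Summable.tsum_comm' (f := fun z y => nstep Ptr n x z * Ptr z y) hF hcol hswap]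
    have h3 : ∀ z, ∑' y, nstep Ptr n x z * Ptr z y = nstep Ptr n x z := by
      intro z; rw [tsum_mul_left, hPsum z, mul_one]
    rw [tsum_congr h3, htot]

lemma tv_sum_bound {Ptr : S → S → ℝ} (hPnn : ∀ x y, 0 ≤ Ptr x y)
    (hPsum : ∀ x, ∑' y, Ptr x y = 1)
    {pr : S → ℝ} (hpr : Summable pr)
    {q0 : S → ℝ} (hq0nn : ∀ x, 0 ≤ q0 x) (hq0sum : ∑' x, q0 x = 1)
    {K₁ ρ : ℝ} (hKρ : 0 ≤ K₁ * ρ ^ k)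
    (hergo : ∀ x, ∑' y, |nstep Ptr k x y - pr y| ≤ K₁ * ρ ^ k) :
    (Summable fun i => |(∑' x, q0 x * nstep Ptr k x i) - pr i|) ∧
    ∑' i, |(∑' x, q0 x * nstep Ptr k x i) - pr i| ≤ K₁ * ρ ^ k := by
  have hq0 : Summable q0 := summable_of_nonneg_of_tsum_eq_one hq0nn hq0sum
  have hx : ∀ x, Summable fun i => |nstep Ptr k x i - pr i| :=
    fun x => (((nstep_row hPnn hPsum k x).1).sub hpr).abs
  set G : S × S → ℝ := fun p => q0 p.1 * |nstep Ptr k p.1 p.2 - pr p.2| with hGdef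
  have hGnn : (0 : S × S → ℝ) ≤ G :=
    fun p => mul_nonneg (hq0nn p.1) (abs_nonneg _)
  have hG : Summable G := by
    rw [summable_prod_of_nonneg hGnn]
    constructor
    · intro x
      have h := (hx x).mul_left (q0 x)
      exact h
    · refine Summable.of_nonneg_of_le (f := fun x => q0 x * (K₁ * ρ ^ k))
        (fun x => tsum_nonneg fun i => hGnn (x, i)) ?_ (hq0.mul_right _)
      intro x
      rw [hGdef]
      simp only [tsum_mul_left]
      exact mul_le_mul_of_nonneg_left (hergo x) (hq0nn x)
  have hGx : ∀ i, Summable fun x => G (x, i) := by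
    intro i
    have := (summable_prod_of_nonneg (f := fun p : S × S => G (p.2, p.1))
      (fun p => hGnn (p.2, p.1))).1 hG.prod_symm
    exact this.1 i
  -- pointwise bound
  have hpoint : ∀ i, |(∑' x, q0 x * nstep Ptr k x i) - pr i| ≤ ∑' x, G (x, i) := by
    intro i
    have hs1 : Summable fun x => q0 x * nstep Ptr k x i := by
      apply hq0.of_nonneg_of_le
        (fun x => mul_nonneg (hq0nn x) (nstep_nonneg hPnn k x i))
      intro x
      have h1 : nstep Ptr k x i ≤ 1 :=
        le_one_of_row (nstep_nonneg hPnn k x) (nstep_row hPnn hPsum k x).2 i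
      have := mul_le_mul_of_nonneg_left h1 (hq0nn x)
      rwa [mul_one] at this
    have hs2 : Summable fun x => q0 x * pr i := hq0.mul_right _
    have hpri : pr i = ∑' x, q0 x * pr i := by
      rw [tsum_mul_right, hq0sum, one_mul]
    calc |(∑' x, q0 x * nstep Ptr k x i) - pr i|
        = |∑' x, (q0 x * nstep Ptr k x i - q0 x * pr i)| := by
          rw [Summable.tsum_sub hs1 hs2]
          rw [← hpri]
      _ ≤ ∑' x, |q0 x * nstep Ptr k x i - q0 x * pr i| := by
          have := norm_tsum_le_tsum_norm (f := fun x => q0 x * nstep Ptr k x i - q0 x * pr i)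
            ((hs1.sub hs2).abs.congr (fun x => (Real.norm_eq_abs _).symm))
          simpa [Real.norm_eq_abs] using this
      _ = ∑' x, G (x, i) := by
          apply tsum_congr
          intro x
          rw [hGdef]
          simp only [← mul_sub, abs_mul, abs_of_nonneg (hq0nn x)]
  have hmaj : Summable fun i => ∑' x, G (x, i) := by
    have := (summable_prod_of_nonneg (f := fun p : S × S => G (p.2, p.1))
      (fun p => hGnn (p.2, p.1))).1 hG.prod_symm
    exact this.2
  have hsummable : Summable fun i => |(∑' x, q0 x * nstep Ptr k x i) - pr i| :=
    Summable.of_nonneg_of_le (fun i => abs_nonneg _) hpoint hmaj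
  refine ⟨hsummable, ?_⟩
  have hGxi : ∀ x, Summable fun i => G (x, i) := ((summable_prod_of_nonneg hGnn).1 hG).1
  calc ∑' i, |(∑' x, q0 x * nstep Ptr k x i) - pr i|
      ≤ ∑' i, ∑' x, G (x, i) := Summable.tsum_le_tsum hpoint hsummable hmaj
    _ = ∑' x, ∑' i, G (x, i) :=
        Summable.tsum_comm' (f := fun x i => G (x, i)) hG hGxi hGx
    _ ≤ ∑' x, q0 x * (K₁ * ρ ^ k) := by
        apply Summable.tsum_le_tsum ?_ ?_ (hq0.mul_right _)
        · intro x
          rw [hGdef]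
          simp only [tsum_mul_left]
          exact mul_le_mul_of_nonneg_left (hergo x) (hq0nn x)
        · exact ((summable_prod_of_nonneg hGnn).1 hG).2
    _ = K₁ * ρ ^ k := by rw [tsum_mul_right, hq0sum, one_mul]

lemma summable_weighted {Ptr : S → S → ℝ} (hPnn : ∀ x y, 0 ≤ Ptr x y)
    (hPsum : ∀ x, ∑' y, Ptr x y = 1)
    {q : S → ℝ} (hqnn : ∀ i, 0 ≤ q i) (hqs : Summable q)
    {w : S × S → ℝ} {C : ℝ} (hw : ∀ p, |w p| ≤ C) :
    Summable fun p : S × S => q p.1 * Ptr p.1 p.2 * w p := by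
  rw [← summable_abs_iff]
  have hmajnn : (0 : S × S → ℝ) ≤ fun p : S × S => q p.1 * Ptr p.1 p.2 * C := by
    intro p
    have h0C : 0 ≤ C := le_trans (abs_nonneg _) (hw p)
    exact mul_nonneg (mul_nonneg (hqnn p.1) (hPnn p.1 p.2)) h0C
  have hrowsum : ∀ i, ∑' j, q i * Ptr i j * C = q i * C := by
    intro i
    have he : ∀ j, q i * Ptr i j * C = (q i * C) * Ptr i j := fun j => by ring
    rw [tsum_congr he, tsum_mul_left, hPsum i, mul_one]
  have hmaj : Summable fun p : S × S => q p.1 * Ptr p.1 p.2 * C := by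
    rw [summable_prod_of_nonneg hmajnn]
    constructor
    · intro i
      have h := ((summable_of_nonneg_of_tsum_eq_one (hPnn i) (hPsum i)).mul_left
        (q i)).mul_right C
      exact h
    · exact (hqs.mul_right C).congr fun i => (hrowsum i).symm
  refine Summable.of_nonneg_of_le (fun p => abs_nonneg _) (fun p => ?_) hmaj
  rw [abs_mul, abs_mul, abs_of_nonneg (hqnn _), abs_of_nonneg (hPnn _ _)]
  exact mul_le_mul_of_nonneg_left (hw p) (mul_nonneg (hqnn p.1) (hPnn p.1 p.2))

lemma tsum_weighted_row {Ptr : S → S → ℝ} (hPnn : ∀ x y, 0 ≤ Ptr x y)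
    (hPsum : ∀ x, ∑' y, Ptr x y = 1)
    {g : S → ℝ} (hgnn : ∀ i, 0 ≤ g i) (hgs : Summable g) {C : ℝ} (h0C : 0 ≤ C) :
    ∑' p : S × S, g p.1 * Ptr p.1 p.2 * C = (∑' i, g i) * C := by
  have hw : ∀ p : S × S, |(fun _ : S × S => C) p| ≤ C := fun p => by
    rw [abs_of_nonneg h0C]
  have hf : Summable fun p : S × S => g p.1 * Ptr p.1 p.2 * C :=
    summable_weighted hPnn hPsum hgnn hgs hw
  have h1 : ∀ i, Summable fun j => g i * Ptr i j * C := by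
    intro i
    have h := ((summable_of_nonneg_of_tsum_eq_one (hPnn i) (hPsum i)).mul_left
      (g i)).mul_right C
    exact h
  rw [Summable.tsum_prod' hf h1]
  have hrowsum : ∀ i, ∑' j, g i * Ptr i j * C = g i * C := by
    intro i
    have he : ∀ j, g i * Ptr i j * C = (g i * C) * Ptr i j := fun j => by ring
    rw [tsum_congr he, tsum_mul_left, hPsum i, mul_one]
  rw [tsum_congr hrowsum, tsum_mul_right]

lemma entry_diff_bound {Ptr : S → S → ℝ} (hPnn : ∀ x y, 0 ≤ Ptr x y)
    (hPsum : ∀ x, ∑' y, Ptr x y = 1)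
    {q pr : S → ℝ} (hqnn : ∀ i, 0 ≤ q i) (hqs : Summable q)
    (hprnn : ∀ i, 0 ≤ pr i) (hprs : Summable pr)
    {w : S × S → ℝ} {C : ℝ} (h0C : 0 ≤ C) (hw : ∀ p, |w p| ≤ C) :
    |(∑' p : S × S, q p.1 * Ptr p.1 p.2 * w p) -
      ∑' p : S × S, pr p.1 * Ptr p.1 p.2 * w p| ≤ (∑' i, |q i - pr i|) * C := by
  have hf : Summable fun p : S × S => q p.1 * Ptr p.1 p.2 * w p :=
    summable_weighted hPnn hPsum hqnn hqs hw
  have hg : Summable fun p : S × S => pr p.1 * Ptr p.1 p.2 * w p :=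
    summable_weighted hPnn hPsum hprnn hprs hw
  rw [← Summable.tsum_sub hf hg]
  have habs : Summable fun p : S × S =>
      |q p.1 * Ptr p.1 p.2 * w p - pr p.1 * Ptr p.1 p.2 * w p| := (hf.sub hg).abs
  have hwC : ∀ p : S × S, |(fun _ : S × S => C) p| ≤ C := fun p => by
    rw [abs_of_nonneg h0C]
  have hmaj : Summable fun p : S × S => |q p.1 - pr p.1| * Ptr p.1 p.2 * C :=
    summable_weighted hPnn hPsum (fun i => abs_nonneg _) (hqs.sub hprs).abs hwC
  have hpt : ∀ p : S × S, |q p.1 * Ptr p.1 p.2 * w p - pr p.1 * Ptr p.1 p.2 * w p|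
      ≤ |q p.1 - pr p.1| * Ptr p.1 p.2 * C := by
    intro p
    have he : q p.1 * Ptr p.1 p.2 * w p - pr p.1 * Ptr p.1 p.2 * w p
        = (q p.1 - pr p.1) * Ptr p.1 p.2 * w p := by ring
    rw [he, abs_mul, abs_mul, abs_of_nonneg (hPnn p.1 p.2)]
    exact mul_le_mul_of_nonneg_left (hw p)
      (mul_nonneg (abs_nonneg _) (hPnn p.1 p.2))
  calc |∑' p : S × S, (q p.1 * Ptr p.1 p.2 * w p - pr p.1 * Ptr p.1 p.2 * w p)|
      ≤ ∑' p : S × S, |q p.1 * Ptr p.1 p.2 * w p - pr p.1 * Ptr p.1 p.2 * w p| := by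
        have h := norm_tsum_le_tsum_norm
          (f := fun p : S × S => q p.1 * Ptr p.1 p.2 * w p - pr p.1 * Ptr p.1 p.2 * w p)
          (habs.congr fun p => (Real.norm_eq_abs _).symm)
        simpa [Real.norm_eq_abs] using h
    _ ≤ ∑' p : S × S, |q p.1 - pr p.1| * Ptr p.1 p.2 * C :=
        Summable.tsum_le_tsum hpt habs hmaj
    _ = (∑' i, |q i - pr i|) * C :=
        tsum_weighted_row hPnn hPsum (fun i => abs_nonneg _) (hqs.sub hprs).abs h0C

end aux

lemma abs_apply_le_norm {d : ℕ} (x : EuclideanSpace ℝ (Fin d)) (a : Fin d) :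
    |x a| ≤ ‖x‖ := by
  rw [EuclideanSpace.norm_eq]
  have h1 : |x a| = Real.sqrt (‖x a‖ ^ 2) := by
    rw [Real.sqrt_sq_eq_abs, Real.norm_eq_abs, abs_abs]
  rw [h1]
  apply Real.sqrt_le_sqrt
  exact Finset.single_le_sum (f := fun i => ‖x i‖ ^ 2)
    (fun i _ => sq_nonneg _) (Finset.mem_univ a)

lemma hsNorm_le_of_entries {d : ℕ} {M : Matrix (Fin d) (Fin d) ℝ} {t : ℝ}
    (h0 : 0 ≤ t) (h : ∀ a b, |M a b| ≤ t) : hsNorm M ≤ d * t := by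
  have hle : ∑ i : Fin d, ∑ j : Fin d, (M i j) ^ 2 ≤ (d : ℝ) * ((d : ℝ) * t ^ 2) := by
    calc ∑ i : Fin d, ∑ j : Fin d, (M i j) ^ 2
        ≤ ∑ _i : Fin d, ∑ _j : Fin d, t ^ 2 := by
          apply Finset.sum_le_sum
          intro i _
          apply Finset.sum_le_sum
          intro j _
          rw [← sq_abs]
          exact pow_le_pow_left₀ (abs_nonneg _) (h i j) 2
      _ = (d : ℝ) * ((d : ℝ) * t ^ 2) := by
          simp [Finset.sum_const, mul_comm]
  calc hsNorm M ≤ Real.sqrt ((d : ℝ) * ((d : ℝ) * t ^ 2)) := Real.sqrt_le_sqrt hle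
    _ = d * t := by
        rw [show (d : ℝ) * ((d : ℝ) * t ^ 2) = (d * t) ^ 2 by ring,
          Real.sqrt_sq (by positivity)]

lemma conj_entry_bound {d : ℕ} (B M : Matrix (Fin d) (Fin d) ℝ) {t : ℝ}
    (ht : ∀ a b, |M a b| ≤ t) (a b : Fin d) :
    |(B * M * B) a b| ≤ (∑ u : Fin d, ∑ v : Fin d, |B u v|) ^ 2 * t := by
  have h0t : 0 ≤ t := le_trans (abs_nonneg _) (ht a b)
  set c₀ := ∑ u : Fin d, ∑ v : Fin d, |B u v| with hc
  have hc0 : 0 ≤ c₀ := Finset.sum_nonneg fun u _ =>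
    Finset.sum_nonneg fun v _ => abs_nonneg _
  have hrow : ∀ a : Fin d, ∑ c : Fin d, |B a c| ≤ c₀ := by
    intro a
    exact Finset.single_le_sum (f := fun u => ∑ v : Fin d, |B u v|)
      (fun u _ => Finset.sum_nonneg fun v _ => abs_nonneg _) (Finset.mem_univ a)
  have hcol : ∀ b : Fin d, ∑ e : Fin d, |B e b| ≤ c₀ := by
    intro b
    calc ∑ e : Fin d, |B e b| ≤ ∑ e : Fin d, ∑ v : Fin d, |B e v| := by
          apply Finset.sum_le_sum
          intro e _
          exact Finset.single_le_sum (f := fun v => |B e v|)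
            (fun v _ => abs_nonneg _) (Finset.mem_univ b)
      _ = c₀ := rfl
  have hentry : (B * M * B) a b = ∑ e : Fin d, (∑ c : Fin d, B a c * M c e) * B e b := by
    simp [Matrix.mul_apply]
  rw [hentry]
  calc |∑ e : Fin d, (∑ c : Fin d, B a c * M c e) * B e b|
      ≤ ∑ e : Fin d, |(∑ c : Fin d, B a c * M c e) * B e b| :=
        Finset.abs_sum_le_sum_abs _ _
    _ ≤ ∑ e : Fin d, (∑ c : Fin d, |B a c|) * t * |B e b| := by
        apply Finset.sum_le_sum
        intro e _
        rw [abs_mul]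
        apply mul_le_mul_of_nonneg_right _ (abs_nonneg _)
        calc |∑ c : Fin d, B a c * M c e| ≤ ∑ c : Fin d, |B a c * M c e| :=
              Finset.abs_sum_le_sum_abs _ _
          _ ≤ ∑ c : Fin d, |B a c| * t := by
              apply Finset.sum_le_sum
              intro c _
              rw [abs_mul]
              exact mul_le_mul_of_nonneg_left (ht c e) (abs_nonneg _)
          _ = (∑ c : Fin d, |B a c|) * t := by rw [Finset.sum_mul]
    _ = (∑ c : Fin d, |B a c|) * t * ∑ e : Fin d, |B e b| := by rw [← Finset.mul_sum]
    _ ≤ c₀ * t * c₀ := by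
        apply mul_le_mul (mul_le_mul_of_nonneg_right (hrow a) h0t) (hcol b)
          (Finset.sum_nonneg fun e _ => abs_nonneg _) (by positivity)
    _ = c₀ ^ 2 * t := by ring

lemma q_facts {S : Type} [Countable S] [MeasurableSpace S] [MeasurableSingletonClass S]
    {Ω : Type} [mΩ : MeasurableSpace Ω] (P : Measure Ω) [IsProbabilityMeasure P]
    {Y : Ω → S} (hY : Measurable Y) :
    Summable (fun i => (P {ω | Y ω = i}).toReal) ∧
      ∑' i, (P {ω | Y ω = i}).toReal = 1 := by
  have hA : ∀ i, MeasurableSet {ω | Y ω = i} := fun i => hY (measurableSet_singleton i)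
  have hdisj : Pairwise (Function.onFun Disjoint fun i => {ω | Y ω = i}) := by
    intro i j hij
    simp only [Function.onFun]
    apply Set.disjoint_left.2
    rintro ω h1 h2
    exact hij ((h1 : Y ω = i).symm.trans h2)
  have hU : ⋃ i, {ω | Y ω = i} = Set.univ := by
    ext ω; simp
  have htsum : ∑' i, P {ω | Y ω = i} = 1 := by
    rw [← measure_iUnion hdisj hA, hU, measure_univ]
  constructor
  · exact ENNReal.summable_toReal (by rw [htsum]; exact ENNReal.one_ne_top)
  · rw [← ENNReal.tsum_toReal_eq (fun i => measure_ne_top P _), htsum, ENNReal.toReal_one]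

lemma chapman {S : Type} [Countable S] [MeasurableSpace S] [MeasurableSingletonClass S]
    {Ω : Type} {mΩ : MeasurableSpace Ω} {P : Measure Ω} [IsProbabilityMeasure P]
    {F : MeasureTheory.Filtration ℕ mΩ} {X : ℕ → Ω → S}
    (hXmeas : ∀ k, Measurable[F k] (X k))
    {Ptr : S → S → ℝ} (hPnn : ∀ x y, 0 ≤ Ptr x y) (hPsum : ∀ x, ∑' y, Ptr x y = 1)
    (hMarkov : ∀ (k : ℕ) (j : S),
      P[fun ω => Set.indicator {ω' | X (k + 1) ω' = j} (fun _ => (1:ℝ)) ω | F k]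
        =ᵐ[P] fun ω => Ptr (X k ω) j)
    (k : ℕ) (j : S) :
    (P {ω | X (k+1) ω = j}).toReal = ∑' i, (P {ω | X k ω = i}).toReal * Ptr i j := by
  have hXk : Measurable (X k) := (hXmeas k).mono (F.le k) le_rfl
  have hXk1 : Measurable (X (k+1)) := (hXmeas (k+1)).mono (F.le (k+1)) le_rfl
  have hA : MeasurableSet {ω | X (k+1) ω = j} := hXk1 (measurableSet_singleton j)
  have h1 : ∫ ω, Set.indicator {ω' | X (k+1) ω' = j} (fun _ => (1:ℝ)) ω ∂P
      = (P {ω | X (k+1) ω = j}).toReal := by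
    rw [integral_indicator_const (1:ℝ) hA, smul_eq_mul, mul_one, measureReal_def]
  have h2 : ∫ ω, (P[fun ω => Set.indicator {ω' | X (k + 1) ω' = j} (fun _ => (1:ℝ)) ω | F k]) ω ∂P
      = ∫ ω, Set.indicator {ω' | X (k+1) ω' = j} (fun _ => (1:ℝ)) ω ∂P :=
    integral_condExp (F.le k)
  have h3 : ∫ ω, (P[fun ω => Set.indicator {ω' | X (k + 1) ω' = j} (fun _ => (1:ℝ)) ω | F k]) ω ∂P
      = ∫ ω, Ptr (X k ω) j ∂P := integral_congr_ae (hMarkov k j)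
  have hgmeas : Measurable (fun i => Ptr i j) := measurable_of_countable _
  haveI hmap : IsProbabilityMeasure (P.map (X k)) := Measure.isProbabilityMeasure_map hXk.aemeasurable
  have hgle1 : ∀ i, Ptr i j ≤ 1 := by
    intro i
    have hs : Summable (Ptr i) := by
      by_contra hns
      have h0 := tsum_eq_zero_of_not_summable hns
      rw [hPsum i] at h0
      norm_num at h0
    have := Summable.le_tsum hs j fun b _ => hPnn i b
    rwa [hPsum i] at this
  have hgint : Integrable (fun i => Ptr i j) (P.map (X k)) := by
    refine Integrable.mono' (integrable_const 1) hgmeas.aestronglyMeasurable ?_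
    filter_upwards with i
    rw [Real.norm_eq_abs, abs_of_nonneg (hPnn i j)]
    exact hgle1 i
  have h4 : ∫ ω, Ptr (X k ω) j ∂P = ∫ i, Ptr i j ∂(P.map (X k)) :=
    (integral_map hXk.aemeasurable hgmeas.aestronglyMeasurable).symm
  have h5 : ∫ i, Ptr i j ∂(P.map (X k)) = ∑' i, ((P.map (X k)) {i}).toReal • Ptr i j :=
    integral_countable' hgint
  have h6 : ∀ i, (P.map (X k)) {i} = P {ω | X k ω = i} := fun i =>
    Measure.map_apply hXk (measurableSet_singleton i)
  rw [← h1, ← h2, h3, h4, h5]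
  apply tsum_congr
  intro i
  rw [h6 i, smul_eq_mul]

/-- Geometric convergence of the expected conditional covariances (the estimate used in the
proof of Theorem 3.2): under Assumption 3.1,
`‖Σ∞^{−1/2} E(Σ_k) Σ∞^{−1/2} − I‖_HS ≤ K ρ^k` for all `k ≥ 1`, where
`E(Σ_k) = Σ_{i,j} p_i(k) P_{ij} (V(j) − E(V(X₁)|X₀=i))(V(j) − E(V(X₁)|X₀=i))ᵀ` and
`p_i(k) = Prob(X_k = i)`. -/
theorem expected_covariance_geometric
    (d : ℕ)
    (S : Type) [Countable S] [MeasurableSpace S] [MeasurableSingletonClass S]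
    (Ω : Type) (mΩ : MeasurableSpace Ω) (P : Measure Ω) [IsProbabilityMeasure P]
    (F : MeasureTheory.Filtration ℕ mΩ) (X : ℕ → Ω → S)
    (hXmeas : ∀ k, Measurable[F k] (X k))
    (Ptr : S → S → ℝ) (hPnn : ∀ x y, 0 ≤ Ptr x y) (hPsum : ∀ x, ∑' y, Ptr x y = 1)
    (hMarkov : ∀ (k : ℕ) (j : S),
      P[fun ω => Set.indicator {ω' | X (k + 1) ω' = j} (fun _ => (1:ℝ)) ω | F k]
        =ᵐ[P] fun ω => Ptr (X k ω) j)
    (pr : S → ℝ) (hprnn : ∀ x, 0 ≤ pr x) (hprsum : ∑' x, pr x = 1)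
    (hstat : ∀ y, ∑' x, pr x * Ptr x y = pr y)
    (huniq : ∀ pr' : S → ℝ, (∀ x, 0 ≤ pr' x) → (∑' x, pr' x = 1) →
      (∀ y, ∑' x, pr' x * Ptr x y = pr' y) → pr' = pr)
    (K₁ ρ : ℝ) (hK₁ : 0 < K₁) (hρ : ρ ∈ Set.Ico (0:ℝ) 1)
    (hergo : ∀ (x : S) (n : ℕ), ∑' y, |nstep Ptr n x y - pr y| ≤ K₁ * ρ ^ n)
    (r V : S → EuclideanSpace ℝ (Fin d)) (M_V : ℝ)
    (hPoisson : ∀ x : S, (∑' y, pr y • r y) = r x + (∑' y, Ptr x y • V y) - V x)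
    (hVbdd : ∀ x : S, ‖V x‖ ≤ M_V)
    (Sinf : Matrix (Fin d) (Fin d) ℝ)
    (hSinf : Sinf = Matrix.of fun a b => ∑' p : S × S,
      pr p.1 * Ptr p.1 p.2 *
        ((V p.2 - ∑' y, Ptr p.1 y • V y) a * (V p.2 - ∑' y, Ptr p.1 y • V y) b))
    (hpos : Sinf.PosDef)
    -- the expected conditional covariance E(Σ_k), written via p_i(k) = Prob(X_k = i)
    (ESk : ℕ → Matrix (Fin d) (Fin d) ℝ)
    (hESk : ∀ k, ESk k = Matrix.of fun a b => ∑' p : S × S,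
      (P {ω | X k ω = p.1}).toReal * Ptr p.1 p.2 *
        ((V p.2 - ∑' y, Ptr p.1 y • V y) a * (V p.2 - ∑' y, Ptr p.1 y • V y) b)) :
    ∃ K : ℝ, ∀ k : ℕ, 1 ≤ k →
      hsNorm ((hpos.posSemidef.sqrt)⁻¹ * ESk k * (hpos.posSemidef.sqrt)⁻¹ - 1) ≤ K * ρ ^ k := by
  classical
  have hρ0 : 0 ≤ ρ := hρ.1
  have hprS : Summable pr := summable_of_nonneg_of_tsum_eq_one hprnn hprsum
  have hSne : Nonempty S := by
    by_contra h
    rw [not_nonempty_iff] at h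
    rw [tsum_empty] at hprsum
    norm_num at hprsum
  have hMV0 : 0 ≤ M_V := le_trans (norm_nonneg _) (hVbdd (Classical.arbitrary S))
  set q : ℕ → S → ℝ := fun k i => (P {ω | X k ω = i}).toReal with hqdef
  have hmeasX : ∀ k, Measurable (X k) := fun k => (hXmeas k).mono (F.le k) le_rfl
  have hqfacts : ∀ k, Summable (q k) ∧ ∑' i, q k i = 1 := fun k => q_facts P (hmeasX k)
  have hqnn : ∀ k i, 0 ≤ q k i := fun k i => ENNReal.toReal_nonneg
  have hchap : ∀ k j, q (k+1) j = ∑' i, q k i * Ptr i j := fun k j =>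
    chapman hXmeas hPnn hPsum hMarkov k j
  -- representation of the law of X k via n-step transition probabilities
  have hrep : ∀ k i, q k i = ∑' x, q 0 x * nstep Ptr k x i := by
    intro k
    induction k with
    | zero =>
      intro i
      have he : ∀ x, q 0 x * nstep Ptr 0 x i = if x = i then q 0 i else 0 := by
        intro x
        unfold nstep
        by_cases h : x = i <;> simp [h]
      rw [tsum_congr he, tsum_ite_eq]
    | succ k ih =>
      intro j
      rw [hchap k j]
      have hqrw : ∀ i, q k i * Ptr i j = (∑' x, q 0 x * nstep Ptr k x i) * Ptr i j := by
        intro i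
        rw [ih i]
      rw [tsum_congr hqrw]
      have hrowS : ∀ x, Summable (nstep Ptr k x) := fun x => (nstep_row hPnn hPsum k x).1
      have hrow1 : ∀ x, ∑' i, nstep Ptr k x i = 1 := fun x => (nstep_row hPnn hPsum k x).2
      have hn1 : ∀ x i, nstep Ptr k x i ≤ 1 := fun x i =>
        le_one_of_row (nstep_nonneg hPnn k x) (hrow1 x) i
      have hP1 : ∀ i j, Ptr i j ≤ 1 := fun i j =>
        le_one_of_row (hPnn i) (hPsum i) j
      set F2 : S × S → ℝ := fun p => q 0 p.1 * nstep Ptr k p.1 p.2 * Ptr p.2 j with hF2def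
      have hF2nn : (0 : S × S → ℝ) ≤ F2 := fun p =>
        mul_nonneg (mul_nonneg (hqnn 0 p.1) (nstep_nonneg hPnn k p.1 p.2)) (hPnn p.2 j)
      have hslice : ∀ x, Summable fun i => F2 (x, i) := by
        intro x
        refine Summable.of_nonneg_of_le (fun i => hF2nn (x, i)) (fun i => ?_)
          ((hrowS x).mul_left (q 0 x))
        have h := mul_le_mul_of_nonneg_left (hP1 i j)
          (mul_nonneg (hqnn 0 x) (nstep_nonneg hPnn k x i))
        rw [mul_one] at h
        exact h
      have hF2 : Summable F2 := by
        rw [summable_prod_of_nonneg hF2nn]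
        refine ⟨hslice, ?_⟩
        refine Summable.of_nonneg_of_le
          (fun x => tsum_nonneg fun i => hF2nn (x, i)) (fun x => ?_) (hqfacts 0).1
        calc ∑' i, F2 (x, i) ≤ ∑' i, q 0 x * nstep Ptr k x i := by
              refine Summable.tsum_le_tsum (fun i => ?_) (hslice x) ((hrowS x).mul_left (q 0 x))
              have h := mul_le_mul_of_nonneg_left (hP1 i j)
                (mul_nonneg (hqnn 0 x) (nstep_nonneg hPnn k x i))
              rw [mul_one] at h
              exact h
          _ = q 0 x := by rw [tsum_mul_left, hrow1 x, mul_one]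
      have hcol : ∀ i, Summable fun x => F2 (x, i) := by
        intro i
        have h := (summable_prod_of_nonneg (f := fun p : S × S => F2 (p.2, p.1))
          (fun p => hF2nn (p.2, p.1))).1 hF2.prod_symm
        exact h.1 i
      have hstep1 : ∀ i, (∑' x, q 0 x * nstep Ptr k x i) * Ptr i j = ∑' x, F2 (x, i) := by
        intro i
        rw [← tsum_mul_right]
      have hswap := Summable.tsum_comm' (f := fun x i => F2 (x, i)) hF2 hslice hcol
      calc ∑' i, (∑' x, q 0 x * nstep Ptr k x i) * Ptr i j
          = ∑' i, ∑' x, F2 (x, i) := tsum_congr hstep1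
        _ = ∑' x, ∑' i, F2 (x, i) := hswap
        _ = ∑' x, q 0 x * nstep Ptr (k+1) x j := by
            apply tsum_congr
            intro x
            rw [nstep_succ]
            rw [← tsum_mul_left]
            apply tsum_congr
            intro i
            rw [hF2def]
            ring
  -- total variation bound on the law of X k
  have hTV : ∀ k : ℕ, ∑' i, |q k i - pr i| ≤ K₁ * ρ ^ k := by
    intro k
    have hKρ : 0 ≤ K₁ * ρ ^ k := mul_nonneg hK₁.le (pow_nonneg hρ0 k)
    have h := (tv_sum_bound hPnn hPsum hprS (hqnn 0) (hqfacts 0).2 hKρ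
      (fun x => hergo x k)).2
    have he : ∀ i, |q k i - pr i| = |(∑' x, q 0 x * nstep Ptr k x i) - pr i| := by
      intro i
      rw [hrep k i]
    rw [tsum_congr he]
    exact h
  -- bound on the weights
  set C : ℝ := (2 * M_V) ^ 2 with hCdef
  have hC0 : 0 ≤ C := sq_nonneg _
  have hmm : ∀ i : S, ‖(∑' y, Ptr i y • V y : EuclideanSpace ℝ (Fin d))‖ ≤ M_V := by
    intro i
    have hrowS : Summable (Ptr i) := summable_of_nonneg_of_tsum_eq_one (hPnn i) (hPsum i)
    have hsn : Summable fun y => ‖Ptr i y • V y‖ := by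
      refine Summable.of_nonneg_of_le (fun y => norm_nonneg _) (fun y => ?_)
        (hrowS.mul_right M_V)
      rw [norm_smul, Real.norm_eq_abs, abs_of_nonneg (hPnn i y)]
      exact mul_le_mul_of_nonneg_left (hVbdd y) (hPnn i y)
    calc ‖(∑' y, Ptr i y • V y : EuclideanSpace ℝ (Fin d))‖
        ≤ ∑' y, ‖Ptr i y • V y‖ := norm_tsum_le_tsum_norm hsn
      _ ≤ ∑' y, Ptr i y * M_V := by
          refine Summable.tsum_le_tsum (fun y => ?_) hsn (hrowS.mul_right M_V)
          rw [norm_smul, Real.norm_eq_abs, abs_of_nonneg (hPnn i y)]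
          exact mul_le_mul_of_nonneg_left (hVbdd y) (hPnn i y)
      _ = M_V := by rw [tsum_mul_right, hPsum i, one_mul]
  have hwbd : ∀ (a b : Fin d) (p : S × S),
      |(V p.2 - ∑' y, Ptr p.1 y • V y) a * (V p.2 - ∑' y, Ptr p.1 y • V y) b| ≤ C := by
    intro a b p
    have hnu : ‖(V p.2 - ∑' y, Ptr p.1 y • V y : EuclideanSpace ℝ (Fin d))‖ ≤ 2 * M_V := by
      calc ‖(V p.2 - ∑' y, Ptr p.1 y • V y : EuclideanSpace ℝ (Fin d))‖
          ≤ ‖V p.2‖ + ‖(∑' y, Ptr p.1 y • V y : EuclideanSpace ℝ (Fin d))‖ := norm_sub_le _ _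
        _ ≤ M_V + M_V := add_le_add (hVbdd p.2) (hmm p.1)
        _ = 2 * M_V := by ring
    rw [abs_mul, hCdef]
    calc |(V p.2 - ∑' y, Ptr p.1 y • V y) a| * |(V p.2 - ∑' y, Ptr p.1 y • V y) b|
        ≤ (2 * M_V) * (2 * M_V) := by
          apply mul_le_mul (le_trans (abs_apply_le_norm _ a) hnu)
            (le_trans (abs_apply_le_norm _ b) hnu) (abs_nonneg _)
            (by positivity)
      _ = (2 * M_V) ^ 2 := by ring
  -- entrywise bound on ESk k - Sinf
  have hent : ∀ (k : ℕ) (a b : Fin d),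
      |(ESk k - Sinf) a b| ≤ K₁ * ρ ^ k * C := by
    intro k a b
    rw [Matrix.sub_apply, hESk k, hSinf]
    simp only [Matrix.of_apply]
    have h := entry_diff_bound hPnn hPsum (hqnn k) (hqfacts k).1 hprnn hprS hC0
      (hwbd a b)
    refine le_trans h ?_
    exact mul_le_mul_of_nonneg_right (hTV k) hC0
  -- matrix algebra
  set sq : Matrix (Fin d) (Fin d) ℝ := hpos.posSemidef.sqrt with hsqdef
  set B : Matrix (Fin d) (Fin d) ℝ := sq⁻¹ with hBdef
  have hdet2 : sq.det * sq.det = Sinf.det := by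
    rw [← Matrix.det_mul, hpos.posSemidef.sqrt_mul_self']
  have hdet0 : sq.det ≠ 0 := by
    intro h
    rw [h, mul_zero] at hdet2
    exact (ne_of_gt hpos.det_pos) hdet2.symm
  have hu : IsUnit sq.det := isUnit_iff_ne_zero.2 hdet0
  have hBl : B * sq = 1 := Matrix.nonsing_inv_mul _ hu
  have hBr : sq * B = 1 := Matrix.mul_nonsing_inv _ hu
  have hBS : B * Sinf * B = 1 := by
    rw [← hpos.posSemidef.sqrt_mul_self', ← hsqdef]
    calc B * (sq * sq) * B = B * (sq * (sq * B)) := by rw [mul_assoc, mul_assoc]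
      _ = (B * sq) * (sq * B) := by rw [← mul_assoc]
      _ = 1 := by rw [hBl, hBr, one_mul]
  set c₀ : ℝ := ∑ u : Fin d, ∑ v : Fin d, |B u v| with hc0def
  refine ⟨(d : ℝ) * (c₀ ^ 2 * (K₁ * C)), ?_⟩
  intro k hk
  have hdiff : B * ESk k * B - 1 = B * (ESk k - Sinf) * B := by
    rw [Matrix.mul_sub, Matrix.sub_mul, hBS]
  rw [hdiff]
  have hconj : ∀ a b : Fin d,
      |(B * (ESk k - Sinf) * B) a b| ≤ c₀ ^ 2 * (K₁ * ρ ^ k * C) :=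
    conj_entry_bound B (ESk k - Sinf) (hent k)
  have ht0 : 0 ≤ c₀ ^ 2 * (K₁ * ρ ^ k * C) := by
    have : 0 ≤ K₁ * ρ ^ k * C :=
      mul_nonneg (mul_nonneg hK₁.le (pow_nonneg hρ0 k)) hC0
    positivity
  calc hsNorm (B * (ESk k - Sinf) * B)
      ≤ (d : ℝ) * (c₀ ^ 2 * (K₁ * ρ ^ k * C)) := hsNorm_le_of_entries ht0 hconj
    _ = (d : ℝ) * (c₀ ^ 2 * (K₁ * C)) * ρ ^ k := by ring
end
end

section
/- Let Ā be an invertible real d×d matrix and let (ε_l)_{l≥0} be positive real numbers. For integers j ≥ 0 and n ≥ j+1 define Υ_j^n = ε_j Σ_{k=j+1}^{n} ∏_{l=j+1}^{k−1}(I − ε_l Ā) − Ā^{−1}, with the convention that a product whose lower index exceeds its upper index equals the identity matrix. Then for all integers j ≥ 0 and n ≥ j+2: Υ_{j+1}^n − Υ_j^n = ε_{j+1}(Υ_{j+1}^n + Ā^{−1})Ā − ε_{j+1} I + ((ε_{j+1} − ε_j)/ε_j)(Υ_j^n + Ā^{−1}). -/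
open scoped BigOperators Matrix

noncomputable section

/-- The ordered matrix product `∏_{l=a}^{b} (I − ε_l Ā)`, with the convention that a product
whose lower index exceeds its upper index equals the identity matrix. -/
def iccMatProd {d : ℕ} (ε : ℕ → ℝ) (A : Matrix (Fin d) (Fin d) ℝ) (a b : ℕ) :
    Matrix (Fin d) (Fin d) ℝ :=
  (((List.range' a (b + 1 - a)).map fun l => (1 : Matrix (Fin d) (Fin d) ℝ) - ε l • A)).prod

/-- `Υ_j^n = ε_j Σ_{k=j+1}^n ∏_{l=j+1}^{k−1}(I − ε_l Ā) − Ā⁻¹`. -/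
def Upsilon {d : ℕ} (ε : ℕ → ℝ) (A : Matrix (Fin d) (Fin d) ℝ) (j n : ℕ) :
    Matrix (Fin d) (Fin d) ℝ :=
  ε j • (∑ k ∈ Finset.Icc (j + 1) n, iccMatProd ε A (j + 1) (k - 1)) - A⁻¹

lemma iccMatProd_empty {d : ℕ} (ε : ℕ → ℝ) (A : Matrix (Fin d) (Fin d) ℝ) {a b : ℕ}
    (h : b + 1 ≤ a) : iccMatProd ε A a b = 1 := by
  unfold iccMatProd
  rw [Nat.sub_eq_zero_of_le h]
  simp

lemma iccMatProd_cons {d : ℕ} (ε : ℕ → ℝ) (A : Matrix (Fin d) (Fin d) ℝ) {a b : ℕ}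
    (h : a ≤ b) :
    iccMatProd ε A a b = ((1 : Matrix (Fin d) (Fin d) ℝ) - ε a • A) * iccMatProd ε A (a + 1) b := by
  unfold iccMatProd
  rw [show b + 1 - a = (b - a) + 1 by omega, show b + 1 - (a + 1) = b - a by omega]
  rfl

lemma iccMatProd_commute {d : ℕ} (ε : ℕ → ℝ) (A : Matrix (Fin d) (Fin d) ℝ) (a b : ℕ) :
    Commute (iccMatProd ε A a b) A := by
  unfold iccMatProd
  apply Commute.list_prod_left
  intro x hx
  simp only [List.mem_map] at hx
  obtain ⟨l, -, rfl⟩ := hx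
  exact (Commute.one_left A).sub_left ((Commute.refl A).smul_left _)

/-- The key algebraic identity for the increments `Υ_{j+1}^n − Υ_j^n` used in the analysis of
averaged TD learning. -/
theorem Upsilon_increment_identity {d : ℕ} (A : Matrix (Fin d) (Fin d) ℝ)
    (hA : IsUnit A.det) (ε : ℕ → ℝ) (hε : ∀ l, 0 < ε l) (j n : ℕ) (hn : j + 2 ≤ n) :
    Upsilon ε A (j + 1) n - Upsilon ε A j n =
      ε (j + 1) • ((Upsilon ε A (j + 1) n + A⁻¹) * A) -
        ε (j + 1) • (1 : Matrix (Fin d) (Fin d) ℝ) +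
        ((ε (j + 1) - ε j) / ε j) • (Upsilon ε A j n + A⁻¹) := by
  set S' : Matrix (Fin d) (Fin d) ℝ :=
    ∑ k ∈ Finset.Icc (j + 1 + 1) n, iccMatProd ε A (j + 1 + 1) (k - 1) with hS'
  have hSj : (∑ k ∈ Finset.Icc (j + 1) n, iccMatProd ε A (j + 1) (k - 1)) =
      1 + ((1 : Matrix (Fin d) (Fin d) ℝ) - ε (j + 1) • A) * S' := by
    rw [show Finset.Icc (j + 1) n = insert (j + 1) (Finset.Icc (j + 2) n) by
      ext x; simp only [Finset.mem_Icc, Finset.mem_insert]; omega]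
    rw [Finset.sum_insert (by simp)]
    rw [iccMatProd_empty ε A (by omega), hS', Finset.mul_sum]
    congr 1
    apply Finset.sum_congr rfl
    intro k hk
    simp only [Finset.mem_Icc] at hk
    rw [← iccMatProd_cons ε A (by omega)]
  have hcomm : S' * A = A * S' := by
    rw [hS', Finset.sum_mul, Finset.mul_sum]
    exact Finset.sum_congr rfl fun k _ => (iccMatProd_commute ε A _ _).eq
  have hεj : ε j ≠ 0 := (hε j).ne'
  simp only [Upsilon, sub_add_cancel]
  rw [← hS', hSj]
  rw [show ((ε (j + 1) - ε j) / ε j) • (ε j • ((1 : Matrix (Fin d) (Fin d) ℝ) + (1 - ε (j + 1) • A) * S')) = (ε (j + 1) - ε j) • ((1 : Matrix (Fin d) (Fin d) ℝ) + (1 - ε (j + 1) • A) * S') by rw [smul_smul, div_mul_cancel₀ _ hεj]]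
  rw [smul_mul_assoc, hcomm, sub_mul, one_mul, Matrix.smul_mul]
  module
end
end

section
/- Let δ ∈ (1/2, 1), let ε_j = 1/(j+1)^δ, let κ₁, κ₂, κ₃, κ₄ > 0, and let k̂ ≥ 0 be an integer with κ₃ ε_{k̂} < 1. Then there exists a constant K such that for all integers k ≥ max(k̂+1, 2): κ₁ ∏_{j=k̂}^{k−1} (1 − κ₃ ε_j) + κ₂ Σ_{j=k̂}^{k−1} κ₄ ε_j² log(1/ε_j) ∏_{l=j+1}^{k−1} (1 − κ₃ ε_l) ≤ K (log k)/k^{2δ−1}. -/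
set_option maxHeartbeats 1000000


open scoped BigOperators

/-- The stepsizes ε_j = 1/(j+1)^δ. -/
noncomputable def eps (δ : ℝ) (j : ℕ) : ℝ := 1 / ((j : ℝ) + 1) ^ δ

lemma eps_pos (δ : ℝ) (j : ℕ) : 0 < eps δ j := by
  have h : (0:ℝ) < ((j:ℝ) + 1) ^ δ := Real.rpow_pos_of_pos (by positivity) δ
  simp only [eps]
  positivity

lemma eps_anti {δ : ℝ} (hδ : 0 ≤ δ) {i j : ℕ} (h : i ≤ j) : eps δ j ≤ eps δ i := by
  have hi : (0:ℝ) < ((i:ℝ)+1) ^ δ := Real.rpow_pos_of_pos (by positivity) δ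
  apply one_div_le_one_div_of_le hi
  apply Real.rpow_le_rpow (by positivity) _ hδ
  have : (i:ℝ) ≤ (j:ℝ) := Nat.cast_le.mpr h
  linarith

noncomputable def GG (δ κ₁ κ₂ κ₃ κ₄ : ℝ) (khat n : ℕ) : ℝ :=
  κ₁ * ∏ j ∈ Finset.Icc khat n, (1 - κ₃ * eps δ j) +
    κ₂ * ∑ j ∈ Finset.Icc khat n, κ₄ * (eps δ j) ^ 2 * Real.log (1 / eps δ j) *
      ∏ l ∈ Finset.Icc (j + 1) n, (1 - κ₃ * eps δ l)

lemma GG_rec (δ κ₁ κ₂ κ₃ κ₄ : ℝ) (khat n : ℕ) (hn : khat ≤ n + 1) :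
    GG δ κ₁ κ₂ κ₃ κ₄ khat (n+1)
      = (1 - κ₃ * eps δ (n+1)) * GG δ κ₁ κ₂ κ₃ κ₄ khat n
        + κ₂ * (κ₄ * (eps δ (n+1)) ^ 2 * Real.log (1 / eps δ (n+1))) := by
  unfold GG
  rw [Finset.prod_Icc_succ_top hn, Finset.sum_Icc_succ_top hn]
  have h1 : ∀ j ∈ Finset.Icc khat n,
      κ₄ * (eps δ j) ^ 2 * Real.log (1 / eps δ j) * ∏ l ∈ Finset.Icc (j+1) (n+1), (1 - κ₃ * eps δ l)
      = (κ₄ * (eps δ j) ^ 2 * Real.log (1 / eps δ j) * ∏ l ∈ Finset.Icc (j+1) n, (1 - κ₃ * eps δ l)) * (1 - κ₃ * eps δ (n+1)) := by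
    intro j hj
    have hj' : j + 1 ≤ n + 1 := by
      have := (Finset.mem_Icc.mp hj).2; omega
    rw [Finset.prod_Icc_succ_top hj']
    ring
  rw [Finset.sum_congr rfl h1]
  have h2 : Finset.Icc (n+1+1) (n+1) = ∅ := Finset.Icc_eq_empty (by omega)
  rw [h2, Finset.prod_empty, ← Finset.sum_mul]
  ring


lemma step_ineq (δ κ₂ κ₃ κ₄ K : ℝ) (hδ1 : 1/2 < δ) (hδ2 : δ < 1)
    (hκ₂ : 0 < κ₂) (hκ₃ : 0 < κ₃) (hκ₄ : 0 < κ₄)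
    (hK : 4 * κ₂ * κ₄ * δ / κ₃ ≤ K)
    (k : ℕ) (hk : 2 ≤ k)
    (hy : 4 / κ₃ ≤ ((k:ℝ) + 1) ^ (1 - δ)) :
    (1 - κ₃ * eps δ k) * (K * Real.log k / (k:ℝ) ^ (2*δ-1)) +
      κ₂ * (κ₄ * (eps δ k) ^ 2 * Real.log (1 / eps δ k)) ≤
    K * Real.log ((k:ℝ)+1) / ((k:ℝ)+1) ^ (2*δ-1) := by
  have hδ0 : 0 < δ := by linarith
  set a : ℝ := 2*δ - 1 with hadef
  have ha0 : 0 < a := by simp [hadef]; linarith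
  have ha1 : a ≤ 1 := by simp [hadef]; linarith
  have haδ : a ≤ δ := by simp [hadef]; linarith
  set x : ℝ := (k:ℝ) with hxdef
  have hx2 : (2:ℝ) ≤ x := by rw [hxdef]; exact_mod_cast hk
  have hx0 : (0:ℝ) < x := by linarith
  set y : ℝ := x + 1 with hydef
  have hy0 : (0:ℝ) < y := by simp only [hydef]; linarith
  have hy1 : (1:ℝ) ≤ y := by simp only [hydef]; linarith
  set A : ℝ := y ^ (-δ) with hAdef
  set B : ℝ := x ^ (-a) with hBdef
  set yA : ℝ := y ^ (-a) with hyAdef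
  set Lx : ℝ := Real.log x with hLxdef
  set Ly : ℝ := Real.log y with hLydef
  have hA : 0 < A := Real.rpow_pos_of_pos hy0 _
  have hB : 0 < B := Real.rpow_pos_of_pos hx0 _
  have hyA : 0 < yA := Real.rpow_pos_of_pos hy0 _
  have hLx : 0 < Lx := Real.log_pos (by linarith)
  have hLy : 0 < Ly := Real.log_pos (by linarith)
  have hLxy : Lx ≤ Ly := Real.log_le_log hx0 (by linarith)
  have hLy2 : Ly ≤ 2 * Lx := by
    have h1 : y ≤ x ^ (2:ℕ) := by simp only [hydef]; nlinarith
    have h2 : Ly ≤ Real.log (x ^ (2:ℕ)) := Real.log_le_log hy0 h1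
    rwa [Real.log_pow, Nat.cast_ofNat] at h2
  -- eps rewrites
  have hepsA : eps δ k = A := by
    rw [eps, hAdef, Real.rpow_neg hy0.le, one_div]
  have hlogeps : Real.log (1 / eps δ k) = δ * Ly := by
    rw [hepsA, hAdef, one_div, ← Real.rpow_neg hy0.le, neg_neg, Real.log_rpow hy0]
  -- A ≤ B
  have hAB : A ≤ B := by
    have h1 : x ^ a ≤ y ^ a := Real.rpow_le_rpow hx0.le (by rw [hydef]; linarith) ha0.le
    have h2 : y ^ a ≤ y ^ δ := Real.rpow_le_rpow_of_exponent_le hy1 haδ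
    have hxa : (0:ℝ) < x ^ a := Real.rpow_pos_of_pos hx0 _
    rw [hAdef, hBdef, Real.rpow_neg hy0.le, Real.rpow_neg hx0.le]
    exact inv_anti₀ hxa (le_trans h1 h2)
  -- B - yA ≤ B / y
  have hs2 : B - yA ≤ B * (1/y) := by
    have hq0 : 0 < x / y := by positivity
    have hq1 : x / y ≤ 1 := by
      rw [div_le_one hy0]; simp [hydef]
    have hs1 : x / y ≤ (x / y) ^ a := by
      have := Real.rpow_le_rpow_of_exponent_ge hq0 hq1 ha1
      rwa [Real.rpow_one] at this
    have hdiv : (x / y) ^ a = x ^ a / y ^ a := Real.div_rpow hx0.le hy0.le a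
    have hyAeq : yA = B * ((x/y) ^ a) := by
      rw [hyAdef, hBdef, hdiv, Real.rpow_neg hx0.le, Real.rpow_neg hy0.le]
      have hxa : (0:ℝ) < x ^ a := Real.rpow_pos_of_pos hx0 _
      field_simp
    rw [hyAeq]
    have h3 : B * (x/y) ≤ B * ((x/y)^a) := mul_le_mul_of_nonneg_left hs1 hB.le
    have h4 : B - B * (x/y) = B * (1/y) := by
      field_simp
      ring
    linarith
  -- 2 / y ≤ (κ₃/2) * A
  have hkey : 2 / y ≤ κ₃ / 2 * A := by
    have h1 : y ^ ((1:ℝ) - δ) = y * A := by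
      rw [Real.rpow_sub hy0, Real.rpow_one, hAdef, Real.rpow_neg hy0.le, div_eq_mul_inv]
    have h2 : 4 / κ₃ ≤ y * A := h1 ▸ hy
    have h3 : 4 ≤ κ₃ * (y * A) := by
      rw [div_le_iff₀ hκ₃] at h2; nlinarith
    rw [div_le_iff₀ hy0]
    nlinarith [mul_pos hy0 hA]
  -- (i')
  have hi : Lx * B - Ly * yA ≤ κ₃ / 2 * A * (Lx * B) := by
    have c1 : Lx * B - Ly * yA ≤ Ly * B - Ly * yA := by
      have := mul_le_mul_of_nonneg_right hLxy hB.le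
      linarith
    have c2 : Ly * (B - yA) ≤ Ly * (B * (1/y)) := mul_le_mul_of_nonneg_left hs2 hLy.le
    have c3 : Ly * (B * (1/y)) ≤ (2 * Lx) * (B * (1/y)) := by
      have : (0:ℝ) ≤ B * (1/y) := by positivity
      exact mul_le_mul_of_nonneg_right hLy2 this
    have c4 : (2 * Lx) * (B * (1/y)) = (2/y) * (Lx * B) := by ring
    have c5 : (2/y) * (Lx * B) ≤ (κ₃/2 * A) * (Lx * B) := by
      have : (0:ℝ) ≤ Lx * B := by positivity
      exact mul_le_mul_of_nonneg_right hkey this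
    have c2' : Ly * B - Ly * yA = Ly * (B - yA) := by ring
    linarith
  -- (ii')
  have hK0 : 0 < K := lt_of_lt_of_le (by positivity) hK
  have hKκ : 4 * κ₂ * κ₄ * δ ≤ K * κ₃ := by
    rw [div_le_iff₀ hκ₃] at hK; linarith
  have hii : κ₂ * κ₄ * δ * (A * A) * Ly ≤ K * κ₃ / 2 * A * (Lx * B) := by
    have d1 : A * A * Ly ≤ A * B * (2 * Lx) := by
      nlinarith [mul_nonneg (sub_nonneg.mpr hAB) (mul_nonneg hA.le (by linarith : (0:ℝ) ≤ 2*Lx)),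
        mul_nonneg (by linarith : (0:ℝ) ≤ 2*Lx - Ly) (mul_nonneg hA.le hA.le)]
    have d2 : κ₂ * κ₄ * δ * (A * A * Ly) ≤ κ₂ * κ₄ * δ * (A * B * (2*Lx)) := by
      apply mul_le_mul_of_nonneg_left d1 (by positivity)
    have d3 : κ₂ * κ₄ * δ * (A * B * (2*Lx)) = (2 * (κ₂ * κ₄ * δ)) * (A * (Lx * B)) := by ring
    have d4 : (2 * (κ₂ * κ₄ * δ)) * (A * (Lx * B)) ≤ (K * κ₃ / 2) * (A * (Lx * B)) := by
      apply mul_le_mul_of_nonneg_right _ (by positivity)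
      linarith
    nlinarith
  -- assemble
  have hxne : x ^ a ≠ 0 := ne_of_gt (Real.rpow_pos_of_pos hx0 _)
  have hBinv : (x ^ a)⁻¹ = B := by rw [hBdef, Real.rpow_neg hx0.le]
  have hyAinv : (y ^ a)⁻¹ = yA := by rw [hyAdef, Real.rpow_neg hy0.le]
  have goal' : (1 - κ₃ * A) * (K * Lx * B) + κ₂ * (κ₄ * A^2 * (δ * Ly)) ≤ K * Ly * yA := by
    have Ki : K * (Lx * B) - K * (Ly * yA) ≤ K * (κ₃ / 2 * A * (Lx * B)) := by
      have := mul_le_mul_of_nonneg_left hi hK0.le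
      linarith [this]
    nlinarith [hii, Ki]
  calc (1 - κ₃ * eps δ k) * (K * Real.log x / x ^ (2*δ-1)) +
      κ₂ * (κ₄ * (eps δ k) ^ 2 * Real.log (1 / eps δ k))
      = (1 - κ₃ * A) * (K * Lx * B) + κ₂ * (κ₄ * A^2 * (δ * Ly)) := by
        rw [hlogeps, hepsA, div_eq_mul_inv, ← hadef, hBinv]
    _ ≤ K * Ly * yA := goal'
    _ = K * Real.log y / y ^ (2*δ-1) := by
        rw [div_eq_mul_inv, ← hadef, hyAinv]



/-- The analytic sequence estimate of Appendix A: for δ ∈ (1/2,1), ε_j = 1/(j+1)^δ,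
positive constants κ₁,…,κ₄ and k̂ with κ₃ ε_{k̂} < 1, the recursive mean-square bound
κ₁ ∏_{j=k̂}^{k−1}(1−κ₃ε_j) + κ₂ Σ_{j=k̂}^{k−1} κ₄ ε_j² log(1/ε_j) ∏_{l=j+1}^{k−1}(1−κ₃ε_l)
is O((log k)/k^{2δ−1}). -/
theorem appendixA_bound (δ : ℝ) (hδ : δ ∈ Set.Ioo (1/2 : ℝ) 1)
    (κ₁ κ₂ κ₃ κ₄ : ℝ) (hκ₁ : 0 < κ₁) (hκ₂ : 0 < κ₂) (hκ₃ : 0 < κ₃) (hκ₄ : 0 < κ₄)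
    (khat : ℕ) (hkhat : κ₃ * eps δ khat < 1) :
    ∃ K : ℝ, ∀ k : ℕ, max (khat + 1) 2 ≤ k →
      κ₁ * ∏ j ∈ Finset.Icc khat (k - 1), (1 - κ₃ * eps δ j) +
        κ₂ * ∑ j ∈ Finset.Icc khat (k - 1), κ₄ * (eps δ j) ^ 2 * Real.log (1 / eps δ j) *
          ∏ l ∈ Finset.Icc (j + 1) (k - 1), (1 - κ₃ * eps δ l) ≤
      K * Real.log k / (k : ℝ) ^ (2 * δ - 1) := by
  obtain ⟨hδ1, hδ2⟩ := hδ
  have hδ0 : (0:ℝ) < δ := by linarith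
  have htend : Filter.Tendsto (fun n : ℕ => ((n:ℝ) + 1) ^ ((1:ℝ) - δ)) Filter.atTop Filter.atTop := by
    apply (tendsto_rpow_atTop (by linarith : (0:ℝ) < 1 - δ)).comp
    exact Filter.tendsto_atTop_add_const_right _ 1 tendsto_natCast_atTop_atTop
  obtain ⟨N, hN⟩ := Filter.eventually_atTop.mp (htend.eventually_ge_atTop (4 / κ₃))
  set m₀ := max (khat + 1) 2 with hm₀def
  set M := max m₀ (N + 2) with hMdef
  have hm₀2 : 2 ≤ m₀ := le_max_right _ _
  have hm₀k : khat + 1 ≤ m₀ := le_max_left _ _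
  have hm₀M : m₀ ≤ M := le_max_left _ _
  have hNM : N + 2 ≤ M := le_max_right _ _
  have hne : (Finset.Icc m₀ M).Nonempty := ⟨m₀, Finset.mem_Icc.mpr ⟨le_refl _, hm₀M⟩⟩
  set K := max (4*κ₂*κ₄*δ/κ₃)
      ((Finset.Icc m₀ M).sup' hne
        (fun k => GG δ κ₁ κ₂ κ₃ κ₄ khat (k-1) / (Real.log k / (k:ℝ) ^ (2*δ-1)))) with hKdef
  have hKstep : 4*κ₂*κ₄*δ/κ₃ ≤ K := le_max_left _ _
  refine ⟨K, ?_⟩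
  have hgpos : ∀ k : ℕ, 2 ≤ k → 0 < Real.log k / (k:ℝ) ^ (2*δ-1) := by
    intro k hk
    have h1 : (1:ℝ) < (k:ℝ) := by exact_mod_cast (by omega : 1 < k)
    have h2 := Real.log_pos h1
    have h3 : (0:ℝ) < (k:ℝ) ^ (2*δ-1) := Real.rpow_pos_of_pos (by linarith) _
    positivity
  have hbase : ∀ k, m₀ ≤ k → k ≤ M →
      GG δ κ₁ κ₂ κ₃ κ₄ khat (k-1) ≤ K * Real.log k / (k:ℝ) ^ (2*δ-1) := by
    intro k h1 h2
    have hmem : k ∈ Finset.Icc m₀ M := Finset.mem_Icc.mpr ⟨h1, h2⟩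
    have hsup := Finset.le_sup'
      (f := fun k => GG δ κ₁ κ₂ κ₃ κ₄ khat (k-1) / (Real.log k / (k:ℝ) ^ (2*δ-1))) hmem
    have hK2 : GG δ κ₁ κ₂ κ₃ κ₄ khat (k-1) / (Real.log k / (k:ℝ) ^ (2*δ-1)) ≤ K :=
      le_trans hsup (le_max_right _ _)
    have hg := hgpos k (le_trans hm₀2 h1)
    rw [div_le_iff₀ hg] at hK2
    calc GG δ κ₁ κ₂ κ₃ κ₄ khat (k-1) ≤ K * (Real.log k / (k:ℝ) ^ (2*δ-1)) := hK2
      _ = K * Real.log k / (k:ℝ) ^ (2*δ-1) := (mul_div_assoc _ _ _).symm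
  have hepsle : ∀ n, khat ≤ n → κ₃ * eps δ n ≤ 1 := by
    intro n hn
    have h1 := eps_anti hδ0.le hn
    nlinarith [eps_pos δ n]
  have main : ∀ k, M ≤ k →
      GG δ κ₁ κ₂ κ₃ κ₄ khat (k-1) ≤ K * Real.log k / (k:ℝ) ^ (2*δ-1) := by
    intro k hk
    induction k, hk using Nat.le_induction with
    | base => exact hbase M hm₀M le_rfl
    | succ n hn ih =>
      have hn2 : 2 ≤ n := le_trans (le_trans hm₀2 hm₀M) hn
      have hnk : khat + 1 ≤ n := le_trans (le_trans hm₀k hm₀M) hn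
      have hrec := GG_rec δ κ₁ κ₂ κ₃ κ₄ khat (n-1) (by omega)
      have hn1 : n - 1 + 1 = n := by omega
      rw [hn1] at hrec
      have hidx : n + 1 - 1 = n := by omega
      rw [hidx, hrec]
      have h0 : 0 ≤ 1 - κ₃ * eps δ n := by
        have := hepsle n (by omega); linarith
      have step := step_ineq δ κ₂ κ₃ κ₄ K hδ1 hδ2 hκ₂ hκ₃ hκ₄ hKstep n hn2
        (hN n (by omega))
      calc (1 - κ₃ * eps δ n) * GG δ κ₁ κ₂ κ₃ κ₄ khat (n-1)
            + κ₂ * (κ₄ * (eps δ n)^2 * Real.log (1/eps δ n))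
          ≤ (1 - κ₃ * eps δ n) * (K * Real.log n / (n:ℝ) ^ (2*δ-1))
            + κ₂ * (κ₄ * (eps δ n)^2 * Real.log (1/eps δ n)) := by
            have := mul_le_mul_of_nonneg_left ih h0
            linarith
        _ ≤ K * Real.log ((n:ℝ)+1) / ((n:ℝ)+1) ^ (2*δ-1) := step
        _ = K * Real.log (((n+1:ℕ)):ℝ) / (((n+1:ℕ)):ℝ) ^ (2*δ-1) := by push_cast; ring
  intro k hk
  have hres : GG δ κ₁ κ₂ κ₃ κ₄ khat (k-1) ≤ K * Real.log k / (k:ℝ) ^ (2*δ-1) := by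
    rcases le_total k M with h | h
    · exact hbase k hk h
    · exact main k h
  simpa [GG] using hres
end
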